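/- arXiv:2312.08798 — 6 statements merged into one kernel-verified Lean document; each statement's English description precedes it below -/
import Mathlib

section
/- seqPhragmén satisfies participation on laminar profiles: for all laminar profiles A, committee sizes k, and voters i ∈ N_A, it is not the case that f(A_{-i},k) ≻_i f(A,k), where f is seqPhragmén. -/
/-- An approval profile is a multiset of approval ballots (anonymous encoding):
each ballot is a nonempty subset of the candidates, and the electorate is nonempty. -/
def validProfile {C : Type*} [DecidableEq C] (A : Multiset (Finset C)) : Prop :=
  A ≠ 0 ∧ ∀ b ∈ A, b ≠ (∅ : Finset C)

/-- Kelly's extension, weak preference. -/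
def KellyWeak {C : Type*} [DecidableEq C] (b : Finset C) (X Y : Set (Finset C)) : Prop :=
  ∀ W ∈ X, ∀ W' ∈ Y, (W' ∩ b).card ≤ (W ∩ b).card

/-- Kelly's extension, strict preference. -/
def KellyStrict {C : Type*} [DecidableEq C] (b : Finset C) (X Y : Set (Finset C)) : Prop :=
  KellyWeak b X Y ∧ ∃ W ∈ X, ∃ W' ∈ Y, (W' ∩ b).card < (W ∩ b).card

/-- Phragmén load value `ℓ(c) = (1 + Σ_{i ∈ N_A(c)} y(i)) / |N_A(c)|`, where the load
function `y` is keyed by ballots (voters with equal ballots always carry equal loads). -/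
def phragLoadVal {C : Type*} [DecidableEq C] (A : Multiset (Finset C))
    (y : Finset C → ℚ) (c : C) : ℚ :=
  (1 + ((A.filter fun b => c ∈ b).map y).sum) /
    ((Multiset.card (A.filter fun b => c ∈ b) : ℚ))

/-- `phragValid A y E L`: starting from voter loads `y` and already elected candidates
`E`, the sequence `L` is a valid continuation of the seqPhragmén process: each elected
candidate is approved by some voter and minimizes the load value among unelected
candidates with nonempty support, and loads are updated accordingly. -/
def phragValid {C : Type*} [DecidableEq C] (A : Multiset (Finset C)) :
    (Finset C → ℚ) → Finset C → List C → Prop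
  | _, _, [] => True
  | y, E, c :: rest =>
      c ∉ E ∧ (A.filter fun b => c ∈ b) ≠ 0 ∧
      (∀ d : C, d ∉ E → (A.filter fun b => d ∈ b) ≠ 0 →
        phragLoadVal A y c ≤ phragLoadVal A y d) ∧
      phragValid A (fun b => if c ∈ b then phragLoadVal A y c else y b) (insert c E) rest

/-- The sequential Phragmén rule. -/
def seqPhragmen {C : Type*} [DecidableEq C] (A : Multiset (Finset C)) (k : ℕ) :
    Set (Finset C) :=
  {W | ∃ L : List C, L.toFinset = W ∧ L.length = k ∧ phragValid A (fun _ => 0) ∅ L}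

/-- A profile is laminar if for all candidates `c, d`, the voter sets `N_A(c)` and
`N_A(d)` are comparable by inclusion or disjoint (in the anonymous encoding:
every ballot containing `c` contains `d`, or conversely, or no ballot contains both). -/
def Laminar {C : Type*} [DecidableEq C] (A : Multiset (Finset C)) : Prop :=
  ∀ c d : C,
    (∀ b ∈ A, c ∈ b → d ∈ b) ∨ (∀ b ∈ A, d ∈ b → c ∈ b) ∨
    (∀ b ∈ A, ¬ (c ∈ b ∧ d ∈ b))

namespace SeqPhrag

variable {C : Type*} [DecidableEq C]

/-- Support of candidate `c` in profile `B` (multiset of ballots approving `c`). -/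
def NN (B : Multiset (Finset C)) (c : C) : Multiset (Finset C) :=
  B.filter (fun β => c ∈ β)

lemma mem_NN {B : Multiset (Finset C)} {c : C} {β : Finset C} :
    β ∈ NN B c ↔ β ∈ B ∧ c ∈ β := Multiset.mem_filter

def nu (B : Multiset (Finset C)) (c : C) : ℚ := (Multiset.card (NN B c) : ℚ)

def supp (B : Multiset (Finset C)) (c : C) : Prop := NN B c ≠ 0

lemma nu_nonneg (B : Multiset (Finset C)) (c : C) : 0 ≤ nu B c := by
  simp [nu]

lemma nu_pos {B : Multiset (Finset C)} {c : C} (h : supp B c) : 0 < nu B c := by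
  have h2 : 0 < Multiset.card (NN B c) := Multiset.card_pos.2 h
  rw [nu]; exact_mod_cast h2

lemma one_div_nu_nonneg (B : Multiset (Finset C)) (c : C) : 0 ≤ 1 / nu B c := by
  have := nu_nonneg B c
  positivity

/-- `N(c) ⊆ N(d)` in ∀-form iff multiset `≤`. -/
lemma sub_iff {B : Multiset (Finset C)} {c d : C} :
    (∀ β ∈ B, c ∈ β → d ∈ β) ↔ NN B c ≤ NN B d := by
  constructor
  · intro h
    have h1 : NN B c = Multiset.filter (fun β => c ∈ β) (NN B d) := by
      rw [NN, NN, Multiset.filter_filter]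
      refine (Multiset.filter_congr (fun β hβ => ?_)).symm
      show (c ∈ β ∧ d ∈ β) ↔ c ∈ β
      exact ⟨fun hx => hx.1, fun hc => ⟨hc, h β hβ hc⟩⟩
    rw [h1]; exact Multiset.filter_le _ _
  · intro h β hβ hc
    have : β ∈ NN B d := Multiset.mem_of_le h (mem_NN.2 ⟨hβ, hc⟩)
    exact (mem_NN.1 this).2

lemma sub_of_le {B : Multiset (Finset C)} {c d : C} (h : NN B c ≤ NN B d)
    {β : Finset C} (hβ : β ∈ B) (hc : c ∈ β) : d ∈ β :=
  (sub_iff.2 h) β hβ hc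

lemma nu_lt_of_lt {B : Multiset (Finset C)} {c d : C} (h : NN B c < NN B d) :
    nu B c < nu B d := by
  have h2 := Multiset.card_lt_card h
  rw [nu, nu]; exact_mod_cast h2

lemma nu_le_of_le {B : Multiset (Finset C)} {c d : C} (h : NN B c ≤ NN B d) :
    nu B c ≤ nu B d := by
  have h2 := Multiset.card_le_card h
  rw [nu, nu]; exact_mod_cast h2

lemma nu_ge_one {B : Multiset (Finset C)} {c : C} (h : supp B c) : 1 ≤ nu B c := by
  have h2 : 1 ≤ Multiset.card (NN B c) := Multiset.card_pos.2 h
  rw [nu]; exact_mod_cast h2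

lemma nu_succ_le_of_lt {B : Multiset (Finset C)} {c d : C} (h : NN B c < NN B d) :
    nu B c + 1 ≤ nu B d := by
  have h2 := Multiset.card_lt_card h
  rw [nu, nu]
  have h3 : Multiset.card (NN B c) + 1 ≤ Multiset.card (NN B d) := h2
  exact_mod_cast h3

lemma nu_congr {B : Multiset (Finset C)} {c d : C} (h : NN B c = NN B d) :
    nu B c = nu B d := by rw [nu, h, nu]

/-- Laminarity in `NN`-form. -/
lemma laminar_cases {B : Multiset (Finset C)} (h : Laminar B) (c d : C) :
    NN B c ≤ NN B d ∨ NN B d ≤ NN B c ∨ (∀ β ∈ B, ¬ (c ∈ β ∧ d ∈ β)) := by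
  rcases h c d with h1 | h1 | h1
  · exact Or.inl (sub_iff.1 h1)
  · exact Or.inr (Or.inl (sub_iff.1 h1))
  · exact Or.inr (Or.inr h1)

lemma laminar_of_le {B B' : Multiset (Finset C)} (h : Laminar B) (hle : B' ≤ B) :
    Laminar B' := by
  intro c d
  rcases h c d with h1 | h1 | h1
  · exact Or.inl (fun β hβ => h1 β (Multiset.mem_of_le hle hβ))
  · exact Or.inr (Or.inl (fun β hβ => h1 β (Multiset.mem_of_le hle hβ)))
  · exact Or.inr (Or.inr (fun β hβ => h1 β (Multiset.mem_of_le hle hβ)))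

end SeqPhrag
namespace SeqPhrag

attribute [local instance 0] Classical.propDecidable

variable {C : Type*} [DecidableEq C]

def Disj (B : Multiset (Finset C)) (c d : C) : Prop :=
  ∀ β ∈ B, c ∈ β → d ∈ β → False

section FT
variable [Fintype C]

/-- Set of (supported) strict "ancestors" of `c`. -/
noncomputable def SAset (B : Multiset (Finset C)) (c : C) : Finset C :=
  Finset.filter (fun f => supp B f ∧ NN B c < NN B f) Finset.univ

lemma mem_SAset {B : Multiset (Finset C)} {c f : C} :
    f ∈ SAset B c ↔ supp B f ∧ NN B c < NN B f := by
  rw [SAset, Finset.mem_filter]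
  simp

/-- Static full base value. -/
noncomputable def fb (B : Multiset (Finset C)) (c : C) : ℚ :=
  ∑ f ∈ SAset B c, 1 / nu B f

/-- Static slot value. -/
noncomputable def sl (B : Multiset (Finset C)) (c : C) (j : ℕ) : ℚ :=
  fb B c + (j : ℚ) / nu B c

lemma SAset_congr {B : Multiset (Finset C)} {c d : C} (h : NN B c = NN B d) :
    SAset B c = SAset B d := by
  apply Finset.ext; intro f
  rw [mem_SAset, mem_SAset, h]

lemma fb_congr {B : Multiset (Finset C)} {c d : C} (h : NN B c = NN B d) :
    fb B c = fb B d := by rw [fb, SAset_congr h, fb]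

lemma fb_nonneg (B : Multiset (Finset C)) (c : C) : 0 ≤ fb B c :=
  Finset.sum_nonneg (fun f _ => one_div_nu_nonneg B f)

lemma sl_congr {B : Multiset (Finset C)} {c d : C} (h : NN B c = NN B d) (j : ℕ) :
    sl B c j = sl B d j := by rw [sl, sl, fb_congr h, nu_congr h]

lemma sl_mono {B : Multiset (Finset C)} {c : C} (hc : supp B c) {i j : ℕ} (h : i ≤ j) :
    sl B c i ≤ sl B c j := by
  have hpos := nu_pos hc
  have hij : (i:ℚ) ≤ (j:ℚ) := by exact_mod_cast h
  rw [sl, sl]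
  have := (div_le_div_iff_of_pos_right hpos).2 hij
  linarith

end FT
end SeqPhrag
namespace SeqPhrag

attribute [local instance 0] Classical.propDecidable

variable {C : Type*} [DecidableEq C]

/-- Accumulated load on the supporters of `d` after electing `E`. -/
noncomputable def acc (B : Multiset (Finset C)) (E : Finset C) (d : C) : ℚ :=
  ∑ e ∈ E.filter (fun e => NN B d ≤ NN B e), 1 / nu B e

/-- Invariant (i): loads are given by the canonical formula. -/
def LoadsOK (B : Multiset (Finset C)) (y : Finset C → ℚ) (E : Finset C) : Prop :=
  ∀ β ∈ B, y β = ∑ e ∈ E.filter (fun e => e ∈ β), 1 / nu B e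

lemma phragLoadVal_def (B : Multiset (Finset C)) (y : Finset C → ℚ) (d : C) :
    phragLoadVal B y d = (1 + ((NN B d).map y).sum) / nu B d := rfl

lemma y_const_on_NN {B : Multiset (Finset C)} {y : Finset C → ℚ} {E : Finset C} {d : C}
    (H1 : LoadsOK B y E)
    (H3d : ∀ e ∈ E, NN B d ≤ NN B e ∨ Disj B d e) :
    ∀ β ∈ NN B d, y β = acc B E d := by
  intro β hβ
  obtain ⟨hβB, hdβ⟩ := mem_NN.1 hβ
  rw [H1 β hβB, acc]
  apply Finset.sum_congr
  · apply Finset.filter_congr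
    intro e heE
    constructor
    · intro heβ
      rcases H3d e heE with hle | hdis
      · exact hle
      · exact absurd (hdis β hβB hdβ heβ) (fun h => h)
    · intro hle
      exact sub_of_le hle hβB hdβ
  · intros; rfl

lemma loadval_eq {B : Multiset (Finset C)} {y : Finset C → ℚ} {E : Finset C} {d : C}
    (H1 : LoadsOK B y E)
    (H3d : ∀ e ∈ E, NN B d ≤ NN B e ∨ Disj B d e)
    (hd : supp B d) :
    phragLoadVal B y d = 1 / nu B d + acc B E d := by
  have hconst := y_const_on_NN H1 H3d
  have hmap : (NN B d).map y = Multiset.replicate (Multiset.card (NN B d)) (acc B E d) := by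
    rw [Multiset.map_congr rfl hconst, Multiset.map_const']
  have hnu : nu B d ≠ 0 := ne_of_gt (nu_pos hd)
  rw [phragLoadVal_def, hmap, Multiset.sum_replicate, nsmul_eq_mul]
  rw [nu] at hnu ⊢
  field_simp

end SeqPhrag
namespace SeqPhrag

attribute [local instance 0] Classical.propDecidable

variable {C : Type*} [DecidableEq C] [Fintype C]

lemma sum_pe_class (B : Multiset (Finset C)) (S : Finset C) (c : C) :
    ∑ e ∈ S.filter (fun e => NN B e = NN B c), 1 / nu B e
      = ((S.filter (fun e => NN B e = NN B c)).card : ℚ) / nu B c := by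
  rw [Finset.sum_congr rfl (fun e he => by
    rw [nu_congr (Finset.mem_filter.1 he).2] : ∀ e ∈ S.filter (fun e => NN B e = NN B c),
      1 / nu B e = 1 / nu B c)]
  rw [Finset.sum_const, nsmul_eq_mul, mul_one_div]

lemma acc_split (B : Multiset (Finset C)) (S : Finset C) (d : C) :
    ∑ e ∈ S.filter (fun e => NN B d ≤ NN B e), 1 / nu B e
      = (∑ e ∈ S.filter (fun e => NN B d < NN B e), 1 / nu B e)
        + ((S.filter (fun e => NN B e = NN B d)).card : ℚ) / nu B d := by
  rw [← sum_pe_class B S d]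
  have hsplit : S.filter (fun e => NN B d ≤ NN B e)
      = S.filter (fun e => NN B d < NN B e) ∪ S.filter (fun e => NN B e = NN B d) := by
    ext e
    simp only [Finset.mem_filter, Finset.mem_union]
    constructor
    · rintro ⟨heS, hle⟩
      rcases lt_or_eq_of_le hle with h | h
      · exact Or.inl ⟨heS, h⟩
      · exact Or.inr ⟨heS, h.symm⟩
    · rintro (⟨heS, h⟩ | ⟨heS, h⟩)
      · exact ⟨heS, le_of_lt h⟩
      · exact ⟨heS, le_of_eq h.symm⟩
  have hdisj : Disjoint (S.filter (fun e => NN B d < NN B e))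
      (S.filter (fun e => NN B e = NN B d)) := by
    apply Finset.disjoint_filter_filter'
    intro p hp1 hp2 e he
    exact absurd (hp2 e he ▸ hp1 e he) (lt_irrefl _)
  rw [hsplit, Finset.sum_union hdisj]

lemma sum_lt_le_fb (B : Multiset (Finset C)) {S : Finset C} {d : C}
    (hsupp : ∀ e ∈ S, supp B e) :
    ∑ e ∈ S.filter (fun e => NN B d < NN B e), 1 / nu B e ≤ fb B d := by
  rw [fb]
  apply Finset.sum_le_sum_of_subset_of_nonneg
  · intro f hf
    obtain ⟨hfS, hlt⟩ := Finset.mem_filter.1 hf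
    exact mem_SAset.2 ⟨hsupp f hfS, hlt⟩
  · intro f _ _; exact one_div_nu_nonneg B f

lemma sum_lt_eq_fb (B : Multiset (Finset C)) {S : Finset C} {d : C}
    (hsupp : ∀ e ∈ S, supp B e)
    (hall : ∀ f, supp B f → NN B d < NN B f → f ∈ S) :
    ∑ e ∈ S.filter (fun e => NN B d < NN B e), 1 / nu B e = fb B d := by
  rw [fb]
  apply Finset.sum_congr _ (fun _ _ => rfl)
  ext f
  rw [Finset.mem_filter, mem_SAset]
  exact ⟨fun ⟨hfS, hlt⟩ => ⟨hsupp f hfS, hlt⟩, fun ⟨hs, hlt⟩ => ⟨hall f hs hlt, hlt⟩⟩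

end SeqPhrag
namespace SeqPhrag

attribute [local instance 0] Classical.propDecidable

variable {C : Type*} [DecidableEq C] [Fintype C]

theorem master_aux (B : Multiset (Finset C)) (hlam : Laminar B) :
    ∀ (L : List C) (y : Finset C → ℚ) (E : Finset C),
      phragValid B y E L →
      LoadsOK B y E →
      (∀ e ∈ E, supp B e) →
      (∀ d, supp B d → d ∉ E → ∀ e ∈ E, NN B d ≤ NN B e ∨ Disj B d e) →
      ∃ J : C → ℕ,
        (∀ x ∈ L, x ∉ E) ∧ L.Nodup ∧
        (∀ d, supp B d → d ∉ E ∪ L.toFinset → ∀ e ∈ E ∪ L.toFinset,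
          NN B d ≤ NN B e ∨ Disj B d e) ∧
        (∀ x ∈ L, supp B x) ∧
        (∀ x ∈ L, (E.filter (fun e => NN B e = NN B x)).card < J x) ∧
        (∀ x ∈ L, J x ≤ ((E ∪ L.toFinset).filter (fun e => NN B e = NN B x)).card) ∧
        (∀ x ∈ L, ∀ x' ∈ L, NN B x = NN B x' → J x = J x' → x = x') ∧
        (∀ x ∈ L, ∀ d, supp B d → d ∉ E ∪ L.toFinset →
          sl B x (J x) ≤ sl B d (((E ∪ L.toFinset).filter (fun e => NN B e = NN B d)).card + 1)) := by
  intro L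
  induction L with
  | nil =>
    intro y E hv H1 H2 H3
    refine ⟨fun _ => 0, by simp, by simp, ?_, by simp, by simp, by simp, by simp, by simp⟩
    simpa using H3
  | cons c L' IH =>
    intro y E hv H1 H2 H3
    simp only [phragValid] at hv
    obtain ⟨hcE, hcNN, hmin, hrest⟩ := hv
    have hsc : supp B c := hcNN
    have H3c : ∀ e ∈ E, NN B c ≤ NN B e ∨ Disj B c e := fun e he => H3 c hsc hcE e he
    have hval_c : phragLoadVal B y c = 1 / nu B c + acc B E c := loadval_eq H1 H3c hsc
    set y' : Finset C → ℚ := fun β => if c ∈ β then phragLoadVal B y c else y β with hy'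
    set E' : Finset C := insert c E with hE'
    -- new invariants
    have H1' : LoadsOK B y' E' := by
      intro β hβ
      by_cases hcβ : c ∈ β
      · have hyβ : y β = acc B E c := y_const_on_NN H1 H3c β (mem_NN.2 ⟨hβ, hcβ⟩)
        have hfe : E'.filter (fun e => e ∈ β) = insert c (E.filter (fun e => e ∈ β)) := by
          rw [hE', Finset.filter_insert, if_pos hcβ]
        simp only [hy', if_pos hcβ]
        rw [hval_c, hfe, Finset.sum_insert (fun hmem => hcE (Finset.mem_of_mem_filter c hmem)),
          ← H1 β hβ, hyβ]
      · simp only [hy', if_neg hcβ]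
        rw [H1 β hβ]
        congr 1
        rw [hE', Finset.filter_insert, if_neg hcβ]
    have H2' : ∀ e ∈ E', supp B e := by
      intro e he
      rcases Finset.mem_insert.1 he with h | h
      · rw [h]; exact hsc
      · exact H2 e h
    have H3' : ∀ d, supp B d → d ∉ E' → ∀ e ∈ E', NN B d ≤ NN B e ∨ Disj B d e := by
      intro d hd hdE' e heE'
      have hdE : d ∉ E := fun hmem => hdE' (Finset.mem_insert_of_mem hmem)
      rcases Finset.mem_insert.1 heE' with rfl | heE
      · -- e = c
        rcases laminar_cases hlam d e with h | h | h
        · exact Or.inl h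
        · rcases lt_or_eq_of_le h with hlt | heq
          · -- strict: contradiction with minimality
            exfalso
            have hvd := loadval_eq H1 (fun e' he' => H3 d hd hdE e' he') hd
            have hmin' := hmin d hdE hd
            obtain ⟨β₀, hβ₀⟩ := Multiset.exists_mem_of_ne_zero hsc
            obtain ⟨hβ₀B, hcβ₀⟩ := mem_NN.1 hβ₀
            have hacc : acc B E e = acc B E d := by
              unfold acc
              refine Finset.sum_congr (Finset.filter_congr ?_) (fun _ _ => rfl)
              intro e' he'
              constructor
              · intro hce'
                rcases H3 d hd hdE e' he' with h1 | h1
                · exact h1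
                · exact absurd (h1 β₀ hβ₀B (sub_of_le (le_of_lt hlt) hβ₀B hcβ₀)
                    (sub_of_le hce' hβ₀B hcβ₀)) (fun q => q)
              · intro hde'
                exact le_trans (le_of_lt hlt) hde'
            rw [hval_c, hvd, hacc] at hmin'
            have hnc := nu_pos hsc
            have hlt' : nu B e < nu B d := nu_lt_of_lt hlt
            have : 1 / nu B d < 1 / nu B e := one_div_lt_one_div_of_lt hnc hlt'
            linarith
          · exact Or.inl (le_of_eq heq.symm)
        · exact Or.inr (fun β hβ h1 h2 => h β hβ ⟨h1, h2⟩)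
      · exact H3 d hd hdE e heE
    obtain ⟨J₀, P1', P2', P3', P4', P5', P6', P7', P8'⟩ := IH y' E' hrest H1' H2' H3'
    set cnt : ℕ := (E.filter (fun e => NN B e = NN B c)).card with hcnt
    set J : C → ℕ := fun x => if x = c then cnt + 1 else J₀ x with hJ
    have hFeq : E ∪ (c :: L').toFinset = E' ∪ L'.toFinset := by
      rw [List.toFinset_cons, hE', Finset.union_insert, Finset.insert_union]
    have hxc : ∀ x ∈ L', x ≠ c := by
      intro x hx hxc
      exact P1' x hx (hxc ▸ Finset.mem_insert_self c E)
    have hJx : ∀ x ∈ L', J x = J₀ x := by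
      intro x hx
      rw [hJ]; simp only [if_neg (hxc x hx)]
    -- the J-bump fact: for x' ∈ L' in the same pool as c
    have hbump : ∀ x' ∈ L', NN B x' = NN B c → cnt + 1 < J₀ x' := by
      intro x' hx' hnn
      have h5 := P5' x' hx'
      have hsub : insert c (E.filter (fun e => NN B e = NN B c))
          ⊆ E'.filter (fun e => NN B e = NN B x') := by
        intro e he
        rcases Finset.mem_insert.1 he with rfl | hmem
        · exact Finset.mem_filter.2 ⟨Finset.mem_insert_self _ _, hnn.symm⟩
        · obtain ⟨heE, hpe⟩ := Finset.mem_filter.1 hmem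
          exact Finset.mem_filter.2 ⟨Finset.mem_insert_of_mem heE, hpe.trans hnn.symm⟩
      have hcard : cnt + 1 ≤ (E'.filter (fun e => NN B e = NN B x')).card := by
        have := Finset.card_le_card hsub
        rwa [Finset.card_insert_of_notMem
          (fun hmem => hcE (Finset.mem_of_mem_filter c hmem))] at this
      omega
    refine ⟨J, ?_, ?_, ?_, ?_, ?_, ?_, ?_, ?_⟩
    · -- not in E
      intro x hx
      rcases List.mem_cons.1 hx with rfl | hx'
      · exact hcE
      · exact fun hmem => P1' x hx' (Finset.mem_insert_of_mem hmem)
    · -- nodup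
      refine List.nodup_cons.2 ⟨?_, P2'⟩
      intro hcL'
      exact P1' c hcL' (Finset.mem_insert_self c E)
    · -- closedness at the end
      intro d hd hdF e heF
      rw [hFeq] at hdF heF
      exact P3' d hd hdF e heF
    · -- supp
      intro x hx
      rcases List.mem_cons.1 hx with rfl | hx'
      · exact hsc
      · exact P4' x hx'
    · -- lower bound on J
      intro x hx
      rcases List.mem_cons.1 hx with rfl | hx'
      · have : J x = cnt + 1 := by rw [hJ]; simp
        omega
      · rw [hJx x hx']
        refine lt_of_le_of_lt (Finset.card_le_card
          (Finset.filter_subset_filter _ (Finset.subset_insert c E))) (P5' x hx')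
    · -- upper bound on J
      intro x hx
      rcases List.mem_cons.1 hx with rfl | hx'
      · have hJxx : J x = cnt + 1 := by rw [hJ]; simp
        rw [hJxx]
        have hsub : insert x (E.filter (fun e => NN B e = NN B x))
            ⊆ (E ∪ (x :: L').toFinset).filter (fun e => NN B e = NN B x) := by
          intro e he
          rcases Finset.mem_insert.1 he with rfl | hmem
          · exact Finset.mem_filter.2 ⟨Finset.mem_union_right _ (by simp), rfl⟩
          · obtain ⟨heE, hpe⟩ := Finset.mem_filter.1 hmem
            exact Finset.mem_filter.2 ⟨Finset.mem_union_left _ heE, hpe⟩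
        have := Finset.card_le_card hsub
        rwa [Finset.card_insert_of_notMem
          (fun hmem => hcE (Finset.mem_of_mem_filter x hmem))] at this
      · rw [hJx x hx', hFeq]
        exact P6' x hx'
    · -- injectivity
      intro x hx x' hx' hnn hJeq
      rcases List.mem_cons.1 hx with rfl | hx1 <;> rcases List.mem_cons.1 hx' with rfl | hx2
      · rfl
      · exfalso
        have := hbump x' hx2 hnn.symm
        have e1 : J x = cnt + 1 := by rw [hJ]; simp
        have e2 : J x' = J₀ x' := hJx x' hx2
        omega
      · exfalso
        have := hbump x hx1 hnn
        have e1 : J x' = cnt + 1 := by rw [hJ]; simp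
        have e2 : J x = J₀ x := hJx x hx1
        omega
      · rw [hJx x hx1, hJx x' hx2] at hJeq
        exact P7' x hx1 x' hx2 hnn hJeq
    · -- the key inequality
      intro x hx d hd hdF
      rcases List.mem_cons.1 hx with rfl | hx'
      · -- x = c
        have hdE : d ∉ E := fun hmem => hdF (Finset.mem_union_left _ hmem)
        have hdc : d ≠ x := by
          intro h
          exact hdF (h ▸ Finset.mem_union_right _ (by simp))
        -- LHS equals the load value of x at this step
        have hJxx : J x = cnt + 1 := by rw [hJ]; simp
        have hLHS : sl B x (J x) = phragLoadVal B y x := by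
          rw [hval_c, hJxx]
          rw [sl, acc, acc_split B E x, ← hcnt]
          have hfbE : ∑ e ∈ E.filter (fun e => NN B x < NN B e), 1 / nu B e = fb B x := by
            apply sum_lt_eq_fb B H2
            intro f hf hlt
            by_cases hfE' : f ∈ E'
            · rcases Finset.mem_insert.1 hfE' with rfl | h
              · exact absurd hlt (lt_irrefl _)
              · exact h
            · exfalso
              rcases H3' f hf hfE' x (Finset.mem_insert_self _ _) with h | h
              · exact absurd (lt_of_lt_of_le hlt h) (lt_irrefl _)
              · obtain ⟨β₀, hβ₀⟩ := Multiset.exists_mem_of_ne_zero hsc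
                obtain ⟨hβ₀B, hcβ₀⟩ := mem_NN.1 hβ₀
                exact h β₀ hβ₀B (sub_of_le (le_of_lt hlt) hβ₀B hcβ₀) hcβ₀
          rw [hfbE]
          have hnc : nu B x ≠ 0 := ne_of_gt (nu_pos hsc)
          push_cast
          field_simp
          ring
        rw [hLHS]
        -- RHS bound
        have H3d : ∀ e ∈ E, NN B d ≤ NN B e ∨ Disj B d e := fun e he => H3 d hd hdE e he
        have hvd := loadval_eq H1 H3d hd
        have hmin' := hmin d hdE hd
        refine le_trans hmin' ?_
        rw [hvd]
        set F : Finset C := E ∪ (x :: L').toFinset with hF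
        have hsuppF : ∀ e ∈ F, supp B e := by
          intro e he
          rcases Finset.mem_union.1 he with h | h
          · exact H2 e h
          · rcases List.mem_cons.1 (List.mem_toFinset.1 h) with rfl | h'
            · exact hsc
            · exact P4' e h'
        have hacc_le : acc B E d ≤ ∑ e ∈ F.filter (fun e => NN B d ≤ NN B e), 1 / nu B e := by
          apply Finset.sum_le_sum_of_subset_of_nonneg
          · exact Finset.filter_subset_filter _ (Finset.subset_union_left)
          · intro f _ _; exact one_div_nu_nonneg B f
        have hsplit := acc_split B F d
        have hfb_le : ∑ e ∈ F.filter (fun e => NN B d < NN B e), 1 / nu B e ≤ fb B d :=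
          sum_lt_le_fb B hsuppF
        have hnd : 0 < nu B d := nu_pos hd
        rw [sl]
        push_cast
        rw [add_div]
        have hone : (1:ℚ) / nu B d = 1 / nu B d := rfl
        linarith [hacc_le, hsplit, hfb_le]
      · -- x ∈ L'
        rw [hJx x hx', hFeq]
        rw [hFeq] at hdF
        exact P8' x hx' d hd hdF
end SeqPhrag
namespace SeqPhrag

attribute [local instance 0] Classical.propDecidable

variable {C : Type*} [DecidableEq C]

lemma le_of_le_cons_of_not_mem {α : Type*} [DecidableEq α] {s t : Multiset α} {a : α}
    (h : s ≤ a ::ₘ t) (ha : a ∉ s) : s ≤ t := by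
  rw [Multiset.le_iff_count] at h ⊢
  intro x
  have hx := h x
  rw [Multiset.count_cons] at hx
  by_cases hxa : x = a
  · subst hxa
    rw [Multiset.count_eq_zero.2 ha]
    exact Nat.zero_le _
  · simpa [hxa] using hx

section ConsFacts

variable {A' : Multiset (Finset C)} {b : Finset C}

lemma NN_cons_pos {c : C} (hc : c ∈ b) : NN (b ::ₘ A') c = b ::ₘ NN A' c :=
  Multiset.filter_cons_of_pos _ hc

lemma NN_cons_neg {c : C} (hc : c ∉ b) : NN (b ::ₘ A') c = NN A' c :=
  Multiset.filter_cons_of_neg _ hc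

lemma bmem {c e : C} (hc : c ∈ b) (h : NN (b ::ₘ A') c ≤ NN (b ::ₘ A') e) : e ∈ b := by
  have hbc : (b : Finset C) ∈ NN (b ::ₘ A') c :=
    mem_NN.2 ⟨Multiset.mem_cons_self _ _, hc⟩
  exact (mem_NN.1 (Multiset.mem_of_le h hbc)).2

lemma cons_le_iff {c e : C} (hc : c ∈ b) (he : e ∈ b) :
    NN (b ::ₘ A') c ≤ NN (b ::ₘ A') e ↔ NN A' c ≤ NN A' e := by
  rw [NN_cons_pos hc, NN_cons_pos he, Multiset.cons_le_cons_iff]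

lemma cons_eq_iff {c e : C} (hc : c ∈ b) (he : e ∈ b) :
    NN (b ::ₘ A') c = NN (b ::ₘ A') e ↔ NN A' c = NN A' e := by
  rw [NN_cons_pos hc, NN_cons_pos he, Multiset.cons_inj_right]

lemma cons_lt_iff {c e : C} (hc : c ∈ b) (he : e ∈ b) :
    NN (b ::ₘ A') c < NN (b ::ₘ A') e ↔ NN A' c < NN A' e := by
  rw [lt_iff_le_and_ne, lt_iff_le_and_ne, cons_le_iff hc he]
  have := cons_eq_iff (A' := A') hc he
  constructor
  · rintro ⟨h1, h2⟩; exact ⟨h1, fun hq => h2 (this.2 hq)⟩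
  · rintro ⟨h1, h2⟩; exact ⟨h1, fun hq => h2 (this.1 hq)⟩

lemma nu_cons_pos {c : C} (hc : c ∈ b) : nu (b ::ₘ A') c = nu A' c + 1 := by
  rw [nu, nu, NN_cons_pos hc, Multiset.card_cons]
  push_cast; ring

lemma nu_cons_neg {c : C} (hc : c ∉ b) : nu (b ::ₘ A') c = nu A' c := by
  rw [nu, nu, NN_cons_neg hc]

lemma supp_cons_pos {c : C} (hc : c ∈ b) : supp (b ::ₘ A') c := by
  rw [supp, NN_cons_pos hc]
  exact Multiset.cons_ne_zero

lemma supp_cons_of_prime {c : C} (h : supp A' c) : supp (b ::ₘ A') c := by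
  by_cases hc : c ∈ b
  · exact supp_cons_pos hc
  · rwa [supp, NN_cons_neg hc]

lemma supp_prime_of_cons_neg {c : C} (hc : c ∉ b) (h : supp (b ::ₘ A') c) : supp A' c := by
  rwa [supp, NN_cons_neg hc] at h

lemma trichotomy_b (hlam : Laminar (b ::ₘ A')) {c d : C} (hc : c ∈ b) (hd : d ∈ b) :
    NN (b ::ₘ A') c ≤ NN (b ::ₘ A') d ∨ NN (b ::ₘ A') d ≤ NN (b ::ₘ A') c := by
  rcases laminar_cases hlam c d with h | h | h
  · exact Or.inl h
  · exact Or.inr h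
  · exact absurd ⟨hc, hd⟩ (h b (Multiset.mem_cons_self _ _))

/-- For `c ∉ b`, the support in `b ::ₘ A'` agrees with the support in `A'`,
so `NN A c ≤ b ::ₘ s → NN A c ≤ s` whenever `b ∉ NN A c`. -/
lemma NN_not_mem_ballot {c : C} (hc : c ∉ b) : (b : Finset C) ∉ NN (b ::ₘ A') c := by
  intro h
  exact hc (mem_NN.1 h).2

end ConsFacts
end SeqPhrag
namespace SeqPhrag

attribute [local instance 0] Classical.propDecidable

variable {C : Type*} [DecidableEq C] [Fintype C]
variable {A' : Multiset (Finset C)} {b : Finset C}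

/-- For a supported-b candidate, primed ancestors coincide with unprimed ancestors. -/
lemma SAset_prime_eq (hlam : Laminar (b ::ₘ A')) {γ : C} (hγ : γ ∈ b) (hs' : supp A' γ) :
    SAset A' γ = SAset (b ::ₘ A') γ := by
  ext f
  rw [mem_SAset, mem_SAset]
  constructor
  · rintro ⟨hf', hlt'⟩
    by_cases hfb : f ∈ b
    · exact ⟨supp_cons_pos hfb, (cons_lt_iff hγ hfb).2 hlt'⟩
    · exfalso
      rcases laminar_cases hlam γ f with h | h | h
      · exact hfb (bmem hγ h)
      · -- NN A f ≤ NN A γ, so NN A' f ≤ NN A' γ, contradiction with strict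
        have h1 : NN A' f ≤ NN A' γ := by
          have h2 : NN A' f ≤ b ::ₘ NN A' γ := by
            rwa [NN_cons_neg hfb, NN_cons_pos hγ] at h
          exact le_of_le_cons_of_not_mem h2
            (by rw [← NN_cons_neg (A' := A') hfb]; exact NN_not_mem_ballot hfb)
        exact absurd (lt_of_lt_of_le hlt' h1) (lt_irrefl _)
      · -- disjoint, but they share a ballot in A'
        obtain ⟨β₀, hβ₀⟩ := Multiset.exists_mem_of_ne_zero hs'
        obtain ⟨hβ₀A, hγβ₀⟩ := mem_NN.1 hβ₀
        have hfβ₀ : f ∈ β₀ := (mem_NN.1 (Multiset.mem_of_le (le_of_lt hlt') hβ₀)).2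
        exact h β₀ (Multiset.mem_cons_of_mem hβ₀A) ⟨hγβ₀, hfβ₀⟩
  · rintro ⟨hf, hlt⟩
    have hfb : f ∈ b := bmem hγ (le_of_lt hlt)
    have hlt' : NN A' γ < NN A' f := (cons_lt_iff hγ hfb).1 hlt
    refine ⟨?_, hlt'⟩
    intro hzero
    rw [hzero] at hlt'
    exact hs' (Multiset.le_zero.1 (le_of_lt hlt'))

lemma fb_prime_b (hlam : Laminar (b ::ₘ A')) {γ : C} (hγ : γ ∈ b) (hs' : supp A' γ) :
    fb A' γ = ∑ f ∈ SAset (b ::ₘ A') γ, 1 / (nu (b ::ₘ A') f - 1) := by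
  rw [fb, SAset_prime_eq hlam hγ hs']
  apply Finset.sum_congr rfl
  intro f hf
  obtain ⟨hfs, hflt⟩ := mem_SAset.1 hf
  have hfb : f ∈ b := bmem hγ (le_of_lt hflt)
  rw [nu_cons_pos hfb]
  ring_nf

/-- The merge set for a non-b candidate. -/
noncomputable def Mrg (A' : Multiset (Finset C)) (b : Finset C) (c : C) : Finset C :=
  Finset.filter (fun e => e ∈ b ∧ NN A' e = NN A' c) Finset.univ

lemma mem_Mrg {c e : C} : e ∈ Mrg A' b c ↔ e ∈ b ∧ NN A' e = NN A' c := by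
  rw [Mrg, Finset.mem_filter]; simp

lemma Mrg_subset_SAset {c : C} (hc : c ∉ b) (hsc : supp (b ::ₘ A') c) :
    Mrg A' b c ⊆ SAset (b ::ₘ A') c := by
  intro e he
  obtain ⟨heb, henn⟩ := mem_Mrg.1 he
  have hNNe : NN (b ::ₘ A') e = b ::ₘ NN (b ::ₘ A') c := by
    rw [NN_cons_pos heb, henn, NN_cons_neg hc]
  refine mem_SAset.2 ⟨supp_cons_pos heb, ?_⟩
  rw [hNNe]
  exact Multiset.lt_cons_self _ _

lemma nu_Mrg {c e : C} (hc : c ∉ b) (he : e ∈ Mrg A' b c) :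
    nu (b ::ₘ A') e = nu (b ::ₘ A') c + 1 := by
  obtain ⟨heb, henn⟩ := mem_Mrg.1 he
  rw [nu_cons_pos heb, nu_cons_neg hc, nu_congr henn]

lemma SAset_prime_nb (hlam : Laminar (b ::ₘ A')) {c : C} (hc : c ∉ b)
    (hsc : supp (b ::ₘ A') c) :
    SAset A' c = SAset (b ::ₘ A') c \ Mrg A' b c := by
  ext f
  rw [Finset.mem_sdiff, mem_SAset, mem_SAset, mem_Mrg]
  constructor
  · rintro ⟨hf', hlt'⟩
    by_cases hfb : f ∈ b
    · constructor
      · constructor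
        · exact supp_cons_pos hfb
        · calc NN (b ::ₘ A') c = NN A' c := NN_cons_neg hc
            _ < NN A' f := hlt'
            _ ≤ b ::ₘ NN A' f := Multiset.le_cons_self _ _
            _ = NN (b ::ₘ A') f := (NN_cons_pos hfb).symm
      · rintro ⟨-, heq⟩
        rw [heq] at hlt'
        exact absurd hlt' (lt_irrefl _)
    · constructor
      · refine ⟨by rwa [supp, NN_cons_neg hfb], ?_⟩
        rw [NN_cons_neg hc, NN_cons_neg hfb]
        exact hlt'
      · rintro ⟨hfb', -⟩; exact hfb hfb'
  · rintro ⟨⟨hf, hlt⟩, hnm⟩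
    by_cases hfb : f ∈ b
    · have h1 : NN A' c ≤ NN A' f := by
        have h2 : NN A' c ≤ b ::ₘ NN A' f := by
          calc NN A' c = NN (b ::ₘ A') c := (NN_cons_neg hc).symm
            _ ≤ NN (b ::ₘ A') f := le_of_lt hlt
            _ = b ::ₘ NN A' f := NN_cons_pos hfb
        refine le_of_le_cons_of_not_mem h2 ?_
        rw [← NN_cons_neg (A' := A') hc]
        exact NN_not_mem_ballot hc
      have hne : NN A' f ≠ NN A' c := fun h => hnm ⟨hfb, h⟩
      have hlt' : NN A' c < NN A' f := lt_of_le_of_ne h1 (fun h => hne h.symm)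
      refine ⟨?_, hlt'⟩
      intro hzero
      rw [hzero] at hlt'
      have : NN A' c = 0 := Multiset.le_zero.1 (le_of_lt hlt')
      rw [supp, NN_cons_neg hc] at hsc
      exact hsc this
    · refine ⟨by rwa [supp, NN_cons_neg hfb] at hf, ?_⟩
      rw [← NN_cons_neg (A' := A') hc, ← NN_cons_neg (A' := A') hfb]
      exact hlt

/-- Pigeonhole: an injective positive ℕ-valued function on a finset attains
a value at least the cardinality. -/
lemma exists_ge_card {T : Finset C} (hT : T.Nonempty) {f : C → ℕ}
    (hinj : ∀ x ∈ T, ∀ x' ∈ T, f x = f x' → x = x') (hpos : ∀ x ∈ T, 1 ≤ f x) :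
    ∃ x ∈ T, T.card ≤ f x := by
  by_contra h
  push_neg at h
  have hsub : T.image f ⊆ Finset.Icc 1 (T.card - 1) := by
    intro v hv
    obtain ⟨x, hx, rfl⟩ := Finset.mem_image.1 hv
    rw [Finset.mem_Icc]
    exact ⟨hpos x hx, by have := h x hx; omega⟩
  have hcard : (T.image f).card = T.card := Finset.card_image_of_injOn hinj
  have h2 := Finset.card_le_card hsub
  rw [hcard, Nat.card_Icc] at h2
  obtain ⟨x, hx⟩ := hT
  have hT1 : 1 ≤ T.card := Finset.card_pos.2 ⟨x, hx⟩
  omega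

end SeqPhrag
namespace SeqPhrag

attribute [local instance 0] Classical.propDecidable

variable {C : Type*} [DecidableEq C] [Fintype C]

set_option maxHeartbeats 1600000 in
theorem endgame (A' : Multiset (Finset C)) (b : Finset C)
    (hlam : Laminar (b ::ₘ A'))
    (W W' : Finset C) (J J' : C → ℕ)
    (hcard : W.card = W'.card)
    (pA1 : ∀ c ∈ W, supp (b ::ₘ A') c)
    (pApos : ∀ c ∈ W, 1 ≤ J c)
    (pAinj : ∀ c ∈ W, ∀ c' ∈ W, NN (b ::ₘ A') c = NN (b ::ₘ A') c' → J c = J c' → c = c')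
    (pAle : ∀ c ∈ W, J c ≤ (W.filter (fun e => NN (b ::ₘ A') e = NN (b ::ₘ A') c)).card)
    (pAkey : ∀ c ∈ W, ∀ d, supp (b ::ₘ A') d → d ∉ W →
      sl (b ::ₘ A') c (J c) ≤
        sl (b ::ₘ A') d ((W.filter (fun e => NN (b ::ₘ A') e = NN (b ::ₘ A') d)).card + 1))
    (pB1 : ∀ c ∈ W', supp A' c)
    (pBpos : ∀ c ∈ W', 1 ≤ J' c)
    (pBinj : ∀ c ∈ W', ∀ c' ∈ W', NN A' c = NN A' c' → J' c = J' c' → c = c')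
    (pBkey : ∀ c ∈ W', ∀ d, supp A' d → d ∉ W' →
      sl A' c (J' c) ≤ sl A' d ((W'.filter (fun e => NN A' e = NN A' d)).card + 1))
    (hlt : (W ∩ b).card < (W' ∩ b).card) : False := by
  -- Step 1: find a b-candidate pool where W' has strictly more members than W
  obtain ⟨c1, hc1W', hc1b, hfib⟩ :
      ∃ c1, c1 ∈ W' ∧ c1 ∈ b ∧
        (W.filter (fun e => NN (b ::ₘ A') e = NN (b ::ₘ A') c1)).card <
          (W'.filter (fun e => NN (b ::ₘ A') e = NN (b ::ₘ A') c1)).card := by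
    by_contra hno
    push_neg at hno
    set g : C → Multiset (Finset C) := fun c => NN (b ::ₘ A') c with hg
    set M : Finset (Multiset (Finset C)) := ((W ∩ b) ∪ (W' ∩ b)).image g with hM
    have hmapsW : ∀ x ∈ W ∩ b, g x ∈ M :=
      fun x hx => Finset.mem_image_of_mem g (Finset.mem_union_left _ hx)
    have hmapsW' : ∀ x ∈ W' ∩ b, g x ∈ M :=
      fun x hx => Finset.mem_image_of_mem g (Finset.mem_union_right _ hx)
    have h1 := Finset.card_eq_sum_card_fiberwise hmapsW
    have h2 := Finset.card_eq_sum_card_fiberwise hmapsW'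
    have hle : ∀ P₀ ∈ M, ((W' ∩ b).filter (fun x => g x = P₀)).card ≤
        ((W ∩ b).filter (fun x => g x = P₀)).card := by
      intro P₀ hP₀
      rcases Finset.eq_empty_or_nonempty ((W' ∩ b).filter (fun x => g x = P₀)) with hemp | hne
      · rw [hemp]; simp
      · obtain ⟨c1, hc1⟩ := hne
        obtain ⟨hc1mem, hc1g⟩ := Finset.mem_filter.1 hc1
        obtain ⟨hc1W', hc1b⟩ := Finset.mem_inter.1 hc1mem
        have hkey := hno c1 hc1W' hc1b
        have hWfib : (W ∩ b).filter (fun x => g x = P₀)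
            = W.filter (fun e => NN (b ::ₘ A') e = NN (b ::ₘ A') c1) := by
          ext e
          rw [Finset.mem_filter, Finset.mem_filter, Finset.mem_inter]
          constructor
          · rintro ⟨⟨heW, _⟩, hge⟩
            exact ⟨heW, hge.trans hc1g.symm⟩
          · rintro ⟨heW, henn⟩
            have heb : e ∈ b := bmem hc1b (le_of_eq henn.symm)
            exact ⟨⟨heW, heb⟩, henn.trans hc1g⟩
        have hW'fib : (W' ∩ b).filter (fun x => g x = P₀)
            = W'.filter (fun e => NN (b ::ₘ A') e = NN (b ::ₘ A') c1) := by
          ext e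
          rw [Finset.mem_filter, Finset.mem_filter, Finset.mem_inter]
          constructor
          · rintro ⟨⟨heW, _⟩, hge⟩
            exact ⟨heW, hge.trans hc1g.symm⟩
          · rintro ⟨heW, henn⟩
            have heb : e ∈ b := bmem hc1b (le_of_eq henn.symm)
            exact ⟨⟨heW, heb⟩, henn.trans hc1g⟩
        rw [hWfib, hW'fib]
        exact hkey
    have hfinal : (W' ∩ b).card ≤ (W ∩ b).card := by
      rw [h1, h2]
      exact Finset.sum_le_sum hle
    omega

  -- Step 2: choose c̄ (named cb) outside W in that pool
  obtain ⟨cb, hcbW, hcbnn⟩ :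
      ∃ cb, cb ∉ W ∧ NN (b ::ₘ A') cb = NN (b ::ₘ A') c1 := by
    by_contra h
    push_neg at h
    have hsub : Finset.univ.filter (fun e => NN (b ::ₘ A') e = NN (b ::ₘ A') c1)
        ⊆ W.filter (fun e => NN (b ::ₘ A') e = NN (b ::ₘ A') c1) := by
      intro e he
      obtain ⟨-, henn⟩ := Finset.mem_filter.1 he
      refine Finset.mem_filter.2 ⟨?_, henn⟩
      by_contra hW
      exact h e hW henn
    have h2 : W'.filter (fun e => NN (b ::ₘ A') e = NN (b ::ₘ A') c1)
        ⊆ Finset.univ.filter (fun e => NN (b ::ₘ A') e = NN (b ::ₘ A') c1) := by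
      intro e he
      exact Finset.mem_filter.2 ⟨Finset.mem_univ _, (Finset.mem_filter.1 he).2⟩
    have := Finset.card_le_card hsub
    have := Finset.card_le_card h2
    omega
  have hcbb : cb ∈ b := bmem hc1b (le_of_eq hcbnn.symm)
  have hsuppcb : supp (b ::ₘ A') cb := supp_cons_pos hcbb
  have hnn'cb : NN A' cb = NN A' c1 := (cons_eq_iff hcbb hc1b).1 hcbnn
  have hsupp'cb : supp A' cb := by
    rw [supp, hnn'cb]; exact pB1 c1 hc1W'
  set r : ℕ := (W.filter (fun e => NN (b ::ₘ A') e = NN (b ::ₘ A') cb)).card with hrdef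
  set r' : ℕ := (W'.filter (fun e => NN (b ::ₘ A') e = NN (b ::ₘ A') cb)).card with hr'def
  have hrr' : r < r' := by
    rw [hrdef, hr'def, hcbnn]; exact hfib
  have hν'cb : 0 < nu A' cb := nu_pos hsupp'cb
  have hνcb : nu (b ::ₘ A') cb = nu A' cb + 1 := nu_cons_pos hcbb
  have hνcb2 : 2 ≤ nu (b ::ₘ A') cb := by rw [hνcb]; linarith [nu_ge_one hsupp'cb]
  -- the full pool of cb
  set Pcb : Finset C := Finset.univ.filter (fun e => NN (b ::ₘ A') e = NN (b ::ₘ A') cb)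
    with hPcb
  have hr'm : r' ≤ Pcb.card := by
    apply Finset.card_le_card
    intro e he
    exact Finset.mem_filter.2 ⟨Finset.mem_univ _, (Finset.mem_filter.1 he).2⟩
  -- Λ and Λ'
  set Λ : ℚ := sl (b ::ₘ A') cb (r + 1) with hΛ
  set Λ' : ℚ := sl A' cb (r + 1) with hΛ'
  -- everybody elected in W pays at most Λ
  have hkeyΛ : ∀ c ∈ W, sl (b ::ₘ A') c (J c) ≤ Λ := by
    intro c hcW
    exact pAkey c hcW cb hsuppcb hcbW
  -- no W-member lies strictly below cb's pool
  have hcontra : ∀ c ∈ W, NN (b ::ₘ A') c < NN (b ::ₘ A') cb → False := by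
    intro c hcW hclt
    have hkey := hkeyΛ c hcW
    have hsub : SAset (b ::ₘ A') cb ∪ Pcb ⊆ SAset (b ::ₘ A') c := by
      intro f hf
      rcases Finset.mem_union.1 hf with h | h
      · obtain ⟨hs, hlt2⟩ := mem_SAset.1 h
        exact mem_SAset.2 ⟨hs, lt_trans hclt hlt2⟩
      · obtain ⟨-, hnn⟩ := Finset.mem_filter.1 h
        refine mem_SAset.2 ⟨fun h0 => hsuppcb (hnn ▸ h0), by rw [hnn]; exact hclt⟩
    have hdisj : Disjoint (SAset (b ::ₘ A') cb) Pcb := by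
      rw [Finset.disjoint_left]
      intro f hf hf2
      obtain ⟨-, hlt2⟩ := mem_SAset.1 hf
      obtain ⟨-, hnn⟩ := Finset.mem_filter.1 hf2
      rw [hnn] at hlt2
      exact absurd hlt2 (lt_irrefl _)
    have hsum : fb (b ::ₘ A') cb + (Pcb.card : ℚ) / nu (b ::ₘ A') cb ≤ fb (b ::ₘ A') c := by
      calc fb (b ::ₘ A') cb + (Pcb.card : ℚ) / nu (b ::ₘ A') cb
          = ∑ f ∈ SAset (b ::ₘ A') cb ∪ Pcb, 1 / nu (b ::ₘ A') f := by
            rw [Finset.sum_union hdisj, fb, hPcb, sum_pe_class]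
        _ ≤ fb (b ::ₘ A') c := by
            rw [fb]
            exact Finset.sum_le_sum_of_subset_of_nonneg hsub
              (fun f _ _ => one_div_nu_nonneg _ f)
    have h1 : ((r:ℚ)+1) ≤ (Pcb.card : ℚ) := by
      exact_mod_cast (by omega : r + 1 ≤ Pcb.card)
    have hνpos : (0:ℚ) < nu (b ::ₘ A') cb := by linarith
    have h2 : ((r:ℚ)+1)/nu (b ::ₘ A') cb ≤ (Pcb.card : ℚ)/nu (b ::ₘ A') cb :=
      by apply div_le_div_of_nonneg_right h1 (le_of_lt hνpos)
    have hsJ : (1:ℚ) ≤ (J c : ℚ) := by exact_mod_cast pApos c hcW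
    have hνc : 0 < nu (b ::ₘ A') c := nu_pos (pA1 c hcW)
    rw [hΛ, sl, sl] at hkey
    have h3 : 0 < (J c : ℚ) / nu (b ::ₘ A') c := by positivity
    push_cast at hkey
    linarith
  have hΛΛ' : Λ < Λ' := by
    have hfb' : fb A' cb = ∑ f ∈ SAset (b ::ₘ A') cb, 1 / (nu (b ::ₘ A') f - 1) :=
      fb_prime_b hlam hcbb hsupp'cb
    have hterm : ∀ f ∈ SAset (b ::ₘ A') cb,
        1 / nu (b ::ₘ A') f ≤ 1 / (nu (b ::ₘ A') f - 1) := by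
      intro f hf
      obtain ⟨hs, hlt2⟩ := mem_SAset.1 hf
      have h3 : nu (b ::ₘ A') cb < nu (b ::ₘ A') f := nu_lt_of_lt hlt2
      apply one_div_le_one_div_of_le <;> linarith
    have hfble : fb (b ::ₘ A') cb ≤ fb A' cb := by
      rw [hfb', fb]; exact Finset.sum_le_sum hterm
    have hν' : nu A' cb = nu (b ::ₘ A') cb - 1 := by linarith
    rw [hΛ, hΛ', sl, sl, hν']
    have hstep : ((r+1 : ℕ):ℚ) / nu (b ::ₘ A') cb
        < ((r+1:ℕ):ℚ) / (nu (b ::ₘ A') cb - 1) := by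
      apply div_lt_div_of_pos_left (a := ((r+1:ℕ):ℚ)) (c := nu (b ::ₘ A') cb - 1) (Nat.cast_pos.2 (Nat.succ_pos r)) (by linarith) (by linarith)
    linarith
  have hWbge : ∀ c ∈ W, c ∈ b → NN (b ::ₘ A') cb ≤ NN (b ::ₘ A') c := by
    intro c hcW hcb2
    rcases trichotomy_b hlam hcbb hcb2 with h | h
    · exact h
    · rcases lt_or_eq_of_le h with h1 | h1
      · exact absurd (hcontra c hcW h1) (fun q => q)
      · exact le_of_eq h1.symm
  have hsuppW' : ∀ c ∈ W, supp A' c := by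
    intro c hcW
    by_cases hcb2 : c ∈ b
    · have h1 : NN A' cb ≤ NN A' c := (cons_le_iff hcbb hcb2).1 (hWbge c hcW hcb2)
      intro hzero
      rw [hzero, Multiset.le_zero] at h1
      exact hsupp'cb h1
    · exact supp_prime_of_cons_neg hcb2 (pA1 c hcW)
  -- shift function
  set shift : C → ℕ := fun c => if c ∈ b then 0 else (Mrg A' b c).card with hshift
  -- the witness x' with a high primed slot
  obtain ⟨x', hx'W', hx'nn, hJ'x'⟩ :
      ∃ x', x' ∈ W' ∧ NN A' x' = NN A' cb ∧
        (W'.filter (fun e => NN A' e = NN A' cb)).card ≤ J' x' := by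
    have hS1 : W'.filter (fun e => NN (b ::ₘ A') e = NN (b ::ₘ A') cb)
        ⊆ W'.filter (fun e => NN A' e = NN A' cb) := by
      intro e he
      obtain ⟨heW', henn⟩ := Finset.mem_filter.1 he
      have heb : e ∈ b := bmem hcbb (le_of_eq henn.symm)
      exact Finset.mem_filter.2 ⟨heW', (cons_eq_iff heb hcbb).1 henn⟩
    have hScard : r' ≤ (W'.filter (fun e => NN A' e = NN A' cb)).card := by
      rw [hr'def]; exact Finset.card_le_card hS1
    have hSne : (W'.filter (fun e => NN A' e = NN A' cb)).Nonempty := by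
      rw [← Finset.card_pos]; omega
    obtain ⟨x', hx'S, hx'c⟩ := exists_ge_card hSne
      (f := J')
      (fun x hx x2 hx2 heq => pBinj x (Finset.mem_of_mem_filter _ hx)
        x2 (Finset.mem_of_mem_filter _ hx2)
        ((Finset.mem_filter.1 hx).2.trans (Finset.mem_filter.1 hx2).2.symm) heq)
      (fun x hx => pBpos x (Finset.mem_of_mem_filter _ hx))
    obtain ⟨hx'W', hx'nn⟩ := Finset.mem_filter.1 hx'S
    exact ⟨x', hx'W', hx'nn, hx'c⟩
  have hSr' : r' ≤ (W'.filter (fun e => NN A' e = NN A' cb)).card := by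
    apply Finset.card_le_card
    intro e he
    obtain ⟨heW', henn⟩ := Finset.mem_filter.1 he
    have heb : e ∈ b := bmem hcbb (le_of_eq henn.symm)
    exact Finset.mem_filter.2 ⟨heW', (cons_eq_iff heb hcbb).1 henn⟩
  have hΛ'x' : Λ' ≤ sl A' x' (J' x') := by
    rw [sl_congr hx'nn]
    exact le_trans (by rw [hΛ']) (sl_mono hsupp'cb (by omega))
  -- CLAIM A : primed slot values of W-members are below Λ'
  set D : C → ℚ := fun f => 1 / (nu (b ::ₘ A') f - 1) - 1 / nu (b ::ₘ A') f with hD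
  have hD0 : ∀ f, 2 ≤ nu (b ::ₘ A') f → 0 ≤ D f := by
    intro f hf
    have h1 := one_div_le_one_div_of_le (by linarith : (0:ℚ) < nu (b ::ₘ A') f - 1)
      (by linarith : nu (b ::ₘ A') f - 1 ≤ nu (b ::ₘ A') f)
    rw [hD]
    simp only []
    linarith
  have hD0' : ∀ f ∈ SAset (b ::ₘ A') cb, 0 ≤ D f := by
    intro f hf
    obtain ⟨-, hlt2⟩ := mem_SAset.1 hf
    have := nu_succ_le_of_lt hlt2
    exact hD0 f (by linarith)
  have hΦgen : ∀ γ, γ ∈ b → supp A' γ →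
      fb A' γ = fb (b ::ₘ A') γ + ∑ f ∈ SAset (b ::ₘ A') γ, D f := by
    intro γ hγ hs'
    rw [fb_prime_b hlam hγ hs', fb, ← Finset.sum_add_distrib]
    apply Finset.sum_congr rfl
    intro f hf
    rw [hD]; ring
  have hνcbne : nu (b ::ₘ A') cb ≠ 0 := by linarith
  have hνcb1ne : nu (b ::ₘ A') cb - 1 ≠ 0 := by linarith
  have hΛ'eq : Λ' = Λ + (∑ f ∈ SAset (b ::ₘ A') cb, D f) + ((r:ℚ)+1) * D cb := by
    rw [hΛ, hΛ', sl, sl, hΦgen cb hcbb hsupp'cb,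
      show nu A' cb = nu (b ::ₘ A') cb - 1 by linarith, hD]
    push_cast
    field_simp
    ring
  have hDcbpos : 0 < D cb := by
    have h1 : (0:ℚ) < nu (b ::ₘ A') cb - 1 := by linarith
    have h2 : nu (b ::ₘ A') cb - 1 < nu (b ::ₘ A') cb := by linarith
    have h3 := one_div_lt_one_div_of_lt h1 h2
    rw [hD]
    simp only []
    linarith
  have hrpos : (0:ℚ) < (r:ℚ) + 1 := by positivity
  have hvA : ∀ c ∈ W, sl A' c (shift c + J c) < Λ' := by
    intro c hcW
    have hkey := hkeyΛ c hcW
    by_cases hcb2 : c ∈ b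
    · have hge := hWbge c hcW hcb2
      have hs'c : supp A' c := hsuppW' c hcW
      have hshift0 : shift c = 0 := by rw [hshift]; simp [hcb2]
      rw [hshift0, Nat.zero_add]
      rcases lt_or_eq_of_le hge with hltc | heqc
      · -- cb's pool strictly below c's support
        have hν'c2 : nu (b ::ₘ A') c = nu A' c + 1 := nu_cons_pos hcb2
        have hνc3 : 3 ≤ nu (b ::ₘ A') c := by
          have := nu_succ_le_of_lt hltc
          linarith
        have hslA'c : sl A' c (J c) = sl (b ::ₘ A') c (J c)
            + (∑ f ∈ SAset (b ::ₘ A') c, D f) + (J c : ℚ) * D c := by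
          rw [sl, sl, hΦgen c hcb2 hs'c,
            show nu A' c = nu (b ::ₘ A') c - 1 by linarith, hD]
          have h1 : nu (b ::ₘ A') c ≠ 0 := by linarith
          have h2 : nu (b ::ₘ A') c - 1 ≠ 0 := by linarith
          simp only []
          field_simp
          ring
        set Pc : Finset C :=
          Finset.univ.filter (fun e => NN (b ::ₘ A') e = NN (b ::ₘ A') c) with hPc
        have hsub : SAset (b ::ₘ A') c ∪ Pc ⊆ SAset (b ::ₘ A') cb := by
          intro f hf
          rcases Finset.mem_union.1 hf with h | h
          · obtain ⟨hs, hlt2⟩ := mem_SAset.1 h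
            exact mem_SAset.2 ⟨hs, lt_trans hltc hlt2⟩
          · obtain ⟨-, hnn⟩ := Finset.mem_filter.1 h
            refine mem_SAset.2 ⟨fun h0 => supp_cons_pos (A' := A') hcb2 (hnn ▸ h0), ?_⟩
            rw [hnn]; exact hltc
        have hdisj : Disjoint (SAset (b ::ₘ A') c) Pc := by
          rw [Finset.disjoint_left]
          intro f hf hf2
          obtain ⟨-, hlt2⟩ := mem_SAset.1 hf
          obtain ⟨-, hnn⟩ := Finset.mem_filter.1 hf2
          rw [hnn] at hlt2
          exact absurd hlt2 (lt_irrefl _)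
        have hPcD : ∑ f ∈ Pc, D f = (Pc.card : ℚ) * D c := by
          rw [Finset.sum_congr rfl (fun f hf => by
            rw [hD]
            simp only []
            rw [nu_congr (Finset.mem_filter.1 hf).2] :
              ∀ f ∈ Pc, D f = D c)]
          rw [Finset.sum_const, nsmul_eq_mul]
        have hJle : (J c : ℚ) ≤ (Pc.card : ℚ) := by
          have h1 := pAle c hcW
          have h2 : (W.filter (fun e => NN (b ::ₘ A') e = NN (b ::ₘ A') c)).card ≤ Pc.card :=
            Finset.card_le_card (fun e he =>
              Finset.mem_filter.2 ⟨Finset.mem_univ _, (Finset.mem_filter.1 he).2⟩)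
          exact_mod_cast le_trans h1 h2
        have hDc0 : 0 ≤ D c := hD0 c (by linarith)
        have hsumle : (∑ f ∈ SAset (b ::ₘ A') c, D f) + (J c : ℚ) * D c
            ≤ ∑ f ∈ SAset (b ::ₘ A') cb, D f := by
          have h1 : (∑ f ∈ SAset (b ::ₘ A') c, D f) + (J c : ℚ) * D c
              ≤ (∑ f ∈ SAset (b ::ₘ A') c, D f) + (Pc.card : ℚ) * D c := by
            have := mul_le_mul_of_nonneg_right hJle hDc0
            linarith
          have h2 : (∑ f ∈ SAset (b ::ₘ A') c, D f) + (Pc.card : ℚ) * D c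
              = ∑ f ∈ SAset (b ::ₘ A') c ∪ Pc, D f := by
            rw [Finset.sum_union hdisj, hPcD]
          have h3 : ∑ f ∈ SAset (b ::ₘ A') c ∪ Pc, D f ≤ ∑ f ∈ SAset (b ::ₘ A') cb, D f :=
            Finset.sum_le_sum_of_subset_of_nonneg hsub (fun f hf _ => hD0' f hf)
          linarith
        have hmul : 0 < ((r:ℚ)+1) * D cb := mul_pos hrpos hDcbpos
        rw [hslA'c]
        rw [hΛ'eq]
        linarith
      · -- same pool as cb
        have hnn'' : NN A' c = NN A' cb := ((cons_eq_iff hcbb hcb2).1 heqc).symm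
        have hJler : J c ≤ r := by
          have h1 := pAle c hcW
          have hfe : W.filter (fun e => NN (b ::ₘ A') e = NN (b ::ₘ A') c)
              = W.filter (fun e => NN (b ::ₘ A') e = NN (b ::ₘ A') cb) := by
            apply Finset.filter_congr
            intro e he
            rw [← heqc]
          rw [hfe] at h1
          omega
        have h2 : sl A' c (J c) = sl A' cb (J c) := sl_congr hnn'' _
        have h3 : sl A' cb (J c) ≤ sl A' cb r := sl_mono hsupp'cb hJler
        have h4 : sl A' cb r < sl A' cb (r+1) := by
          rw [sl, sl]
          have h5 : ((r:ℕ):ℚ) < ((r+1:ℕ):ℚ) := by exact_mod_cast Nat.lt_succ_self r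
          have h7 : ((r:ℕ):ℚ) / nu A' cb < ((r+1:ℕ):ℚ) / nu A' cb :=
            div_lt_div_of_pos_right h5 hν'cb
          linarith
        rw [h2]
        calc sl A' cb (J c) ≤ sl A' cb r := h3
          _ < sl A' cb (r+1) := h4
          _ = Λ' := by rw [hΛ']
    · -- c ∉ b
      have hshiftc : shift c = (Mrg A' b c).card := by rw [hshift]; simp [hcb2]
      have hsc : supp (b ::ₘ A') c := pA1 c hcW
      have hSA' : SAset A' c = SAset (b ::ₘ A') c \ Mrg A' b c := SAset_prime_nb hlam hcb2 hsc
      have hMsub : Mrg A' b c ⊆ SAset (b ::ₘ A') c := Mrg_subset_SAset hcb2 hsc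
      have hνc : nu A' c = nu (b ::ₘ A') c := (nu_cons_neg (A' := A') hcb2).symm
      have hνcpos : 0 < nu (b ::ₘ A') c := nu_pos hsc
      have hterm : ∀ f ∈ SAset (b ::ₘ A') c \ Mrg A' b c,
          1 / nu A' f = 1 / nu (b ::ₘ A') f + (if f ∈ b then D f else 0) := by
        intro f hf
        by_cases hfb : f ∈ b
        · rw [if_pos hfb, hD]
          have h1 : nu (b ::ₘ A') f = nu A' f + 1 := nu_cons_pos hfb
          rw [show nu A' f = nu (b ::ₘ A') f - 1 by linarith]
          ring
        · rw [if_neg hfb, nu_cons_neg hfb]; ring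
      have hfb'c : fb A' c
          = (∑ f ∈ SAset (b ::ₘ A') c \ Mrg A' b c, 1 / nu (b ::ₘ A') f)
            + ∑ f ∈ SAset (b ::ₘ A') c \ Mrg A' b c, (if f ∈ b then D f else 0) := by
        rw [fb, hSA', ← Finset.sum_add_distrib]
        exact Finset.sum_congr rfl hterm
      have hMrgsum : ∑ f ∈ Mrg A' b c, 1 / nu (b ::ₘ A') f
          = (((Mrg A' b c).card : ℕ) : ℚ) * (1 / (nu (b ::ₘ A') c + 1)) := by
        rw [Finset.sum_congr rfl (fun f hf => by rw [nu_Mrg hcb2 hf] :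
          ∀ f ∈ Mrg A' b c, 1 / nu (b ::ₘ A') f = 1 / (nu (b ::ₘ A') c + 1))]
        rw [Finset.sum_const, nsmul_eq_mul]
      have hMrgD : ∑ f ∈ Mrg A' b c, (if f ∈ b then D f else 0)
          = (((Mrg A' b c).card : ℕ) : ℚ)
            * (1 / nu (b ::ₘ A') c - 1 / (nu (b ::ₘ A') c + 1)) := by
        rw [Finset.sum_congr rfl (fun f hf => by
          rw [if_pos (mem_Mrg.1 hf).1, hD]
          simp only []
          rw [nu_Mrg hcb2 hf]
          ring_nf :
          ∀ f ∈ Mrg A' b c, (if f ∈ b then D f else 0)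
            = 1 / nu (b ::ₘ A') c - 1 / (nu (b ::ₘ A') c + 1))]
        rw [Finset.sum_const, nsmul_eq_mul]
      have hfbAc : (∑ f ∈ SAset (b ::ₘ A') c \ Mrg A' b c, 1 / nu (b ::ₘ A') f)
          + ∑ f ∈ Mrg A' b c, 1 / nu (b ::ₘ A') f = fb (b ::ₘ A') c := by
        rw [fb]; exact Finset.sum_sdiff hMsub
      have hsplitD : (∑ f ∈ SAset (b ::ₘ A') c \ Mrg A' b c, (if f ∈ b then D f else 0))
          + ∑ f ∈ Mrg A' b c, (if f ∈ b then D f else 0)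
          = ∑ f ∈ SAset (b ::ₘ A') c, (if f ∈ b then D f else 0) := Finset.sum_sdiff hMsub
      have hgoalid : sl A' c (shift c + J c)
          = sl (b ::ₘ A') c (J c)
            + ∑ f ∈ SAset (b ::ₘ A') c, (if f ∈ b then D f else 0) := by
        rw [sl, sl, hνc, hfb'c, hshiftc, ← hfbAc, ← hsplitD, hMrgsum, hMrgD]
        push_cast
        ring
      have hSb : ∀ f ∈ SAset (b ::ₘ A') c, f ∈ b → f ∈ SAset (b ::ₘ A') cb := by
        intro f hf hfb
        obtain ⟨hfs, hflt⟩ := mem_SAset.1 hf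
        rcases trichotomy_b hlam hfb hcbb with h | h
        · rcases lt_or_eq_of_le h with h1 | h1
          · exact absurd (hcontra c hcW (lt_trans hflt h1)) (fun q => q)
          · rw [h1] at hflt
            exact absurd (hcontra c hcW hflt) (fun q => q)
        · rcases lt_or_eq_of_le h with h1 | h1
          · exact mem_SAset.2 ⟨hfs, h1⟩
          · rw [← h1] at hflt
            exact absurd (hcontra c hcW hflt) (fun q => q)
      have hsumite : ∑ f ∈ SAset (b ::ₘ A') c, (if f ∈ b then D f else 0)
          ≤ ∑ f ∈ SAset (b ::ₘ A') cb, D f := by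
        rw [← Finset.sum_filter]
        apply Finset.sum_le_sum_of_subset_of_nonneg
        · intro f hf
          obtain ⟨hf1, hf2⟩ := Finset.mem_filter.1 hf
          exact hSb f hf1 hf2
        · intro f hf _
          exact hD0' f hf
      have hmul : 0 < ((r:ℚ)+1) * D cb := mul_pos hrpos hDcbpos
      rw [hgoalid, hΛ'eq]
      linarith
  -- CLAIM B : primed slot indices of W-members fit into W' classes
  have hvB : ∀ c ∈ W, shift c + J c ≤ (W'.filter (fun e => NN A' e = NN A' c)).card := by
    intro c hcW
    by_contra hgt
    push_neg at hgt
    set Cl : Finset C := Finset.univ.filter (fun e => NN A' e = NN A' c) with hCl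
    have hclcard : shift c + J c ≤ Cl.card := by
      by_cases hcb2 : c ∈ b
      · have hshift0 : shift c = 0 := by rw [hshift]; simp [hcb2]
        rw [hshift0, Nat.zero_add]
        have h1 := pAle c hcW
        have h2 : W.filter (fun e => NN (b ::ₘ A') e = NN (b ::ₘ A') c) ⊆ Cl := by
          intro e he
          obtain ⟨heW, henn⟩ := Finset.mem_filter.1 he
          have heb : e ∈ b := bmem hcb2 (le_of_eq henn.symm)
          exact Finset.mem_filter.2 ⟨Finset.mem_univ _, (cons_eq_iff heb hcb2).1 henn⟩
        exact le_trans h1 (Finset.card_le_card h2)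
      · have hshiftc : shift c = (Mrg A' b c).card := by rw [hshift]; simp [hcb2]
        set Ap : Finset C :=
          Finset.univ.filter (fun e => NN (b ::ₘ A') e = NN (b ::ₘ A') c) with hAp
        have hnotb : ∀ e, NN (b ::ₘ A') e = NN (b ::ₘ A') c → e ∉ b := by
          intro e henn heb
          have hmem : (b : Finset C) ∈ NN (b ::ₘ A') e :=
            mem_NN.2 ⟨Multiset.mem_cons_self _ _, heb⟩
          rw [henn] at hmem
          exact hcb2 (mem_NN.1 hmem).2
        have hApsub : Ap ⊆ Cl := by
          intro e he
          obtain ⟨-, henn⟩ := Finset.mem_filter.1 he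
          refine Finset.mem_filter.2 ⟨Finset.mem_univ _, ?_⟩
          rw [← NN_cons_neg (A' := A') (hnotb e henn), ← NN_cons_neg (A' := A') hcb2]
          exact henn
        have hMrgsub : Mrg A' b c ⊆ Cl := by
          intro e he
          exact Finset.mem_filter.2 ⟨Finset.mem_univ _, (mem_Mrg.1 he).2⟩
        have hdisj2 : Disjoint Ap (Mrg A' b c) := by
          rw [Finset.disjoint_left]
          intro e he hem
          obtain ⟨-, henn⟩ := Finset.mem_filter.1 he
          exact hnotb e henn (mem_Mrg.1 hem).1
        have h1 := pAle c hcW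
        have h2 : (W.filter (fun e => NN (b ::ₘ A') e = NN (b ::ₘ A') c)).card ≤ Ap.card :=
          Finset.card_le_card (fun e he =>
            Finset.mem_filter.2 ⟨Finset.mem_univ _, (Finset.mem_filter.1 he).2⟩)
        have h3 : Ap.card + (Mrg A' b c).card ≤ Cl.card := by
          rw [← Finset.card_union_of_disjoint hdisj2]
          exact Finset.card_le_card (Finset.union_subset hApsub hMrgsub)
        omega
    obtain ⟨d, hdCl, hdW'⟩ : ∃ d, d ∈ Cl ∧ d ∉ W' := by
      by_contra h
      push_neg at h
      have hsub : Cl ⊆ W'.filter (fun e => NN A' e = NN A' c) := by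
        intro e he
        exact Finset.mem_filter.2 ⟨h e he, (Finset.mem_filter.1 he).2⟩
      have := Finset.card_le_card hsub
      omega
    have hdnn : NN A' d = NN A' c := (Finset.mem_filter.1 hdCl).2
    have hs'c : supp A' c := hsuppW' c hcW
    have hs'd : supp A' d := by rw [supp, hdnn]; exact hs'c
    have hBkey := pBkey x' hx'W' d hs'd hdW'
    have hfcongr : W'.filter (fun e => NN A' e = NN A' d)
        = W'.filter (fun e => NN A' e = NN A' c) := by
      apply Finset.filter_congr
      intro e he
      rw [hdnn]
    rw [hfcongr] at hBkey
    have h5 : sl A' d ((W'.filter (fun e => NN A' e = NN A' c)).card + 1)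
        = sl A' c ((W'.filter (fun e => NN A' e = NN A' c)).card + 1) := sl_congr hdnn _
    have h6 : sl A' c ((W'.filter (fun e => NN A' e = NN A' c)).card + 1)
        ≤ sl A' c (shift c + J c) := sl_mono hs'c (by omega)
    have h7 := hvA c hcW
    linarith [hΛ'x']
  -- Final counting
  set M : Finset (Multiset (Finset C)) :=
    W.image (fun c => NN A' c) ∪ W'.image (fun c => NN A' c) with hM
  have hmapsW : ∀ x ∈ W, NN A' x ∈ M :=
    fun x hx => Finset.mem_union_left _ (Finset.mem_image_of_mem _ hx)
  have hmapsW' : ∀ x ∈ W', NN A' x ∈ M :=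
    fun x hx => Finset.mem_union_right _ (Finset.mem_image_of_mem _ hx)
  have h1 := Finset.card_eq_sum_card_fiberwise hmapsW
  have h2 := Finset.card_eq_sum_card_fiberwise hmapsW'
  -- the injection facts, for an arbitrary fiber
  have hinjgen : ∀ P₀ : Multiset (Finset C), ∀ x ∈ W.filter (fun x => NN A' x = P₀),
      ∀ x2 ∈ W.filter (fun x => NN A' x = P₀), shift x + J x = shift x2 + J x2 → x = x2 := by
    intro P₀ x hx x2 hx2 heq
    obtain ⟨hxW, hxg⟩ := Finset.mem_filter.1 hx
    obtain ⟨hx2W, hx2g⟩ := Finset.mem_filter.1 hx2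
    have hnn : NN A' x = NN A' x2 := hxg.trans hx2g.symm
    have hmixed : ∀ z ∈ W, ∀ z2 ∈ W, z ∈ b → z2 ∉ b → NN A' z = NN A' z2 →
        shift z + J z = shift z2 + J z2 → False := by
      intro z hzW z2 hz2W hb1 hb2 hnnz heqz
      have hsub : Finset.univ.filter (fun e => NN (b ::ₘ A') e = NN (b ::ₘ A') z)
          ⊆ Mrg A' b z2 := by
        intro e he
        obtain ⟨-, henn⟩ := Finset.mem_filter.1 he
        have heb : e ∈ b := bmem hb1 (le_of_eq henn.symm)
        refine mem_Mrg.2 ⟨heb, ?_⟩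
        rw [← hnnz]
        exact (cons_eq_iff heb hb1).1 henn
      have h1' := pAle z hzW
      have h2' : (W.filter (fun e => NN (b ::ₘ A') e = NN (b ::ₘ A') z)).card
          ≤ (Finset.univ.filter (fun e => NN (b ::ₘ A') e = NN (b ::ₘ A') z)).card :=
        Finset.card_le_card (fun e he =>
          Finset.mem_filter.2 ⟨Finset.mem_univ _, (Finset.mem_filter.1 he).2⟩)
      have h3' := Finset.card_le_card hsub
      have hs1 : shift z = 0 := by rw [hshift]; simp [hb1]
      have hs2 : shift z2 = (Mrg A' b z2).card := by rw [hshift]; simp [hb2]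
      have hJ2 := pApos z2 hz2W
      omega
    by_cases hb1 : x ∈ b <;> by_cases hb2 : x2 ∈ b
    · have hs1 : shift x = 0 := by rw [hshift]; simp [hb1]
      have hs2 : shift x2 = 0 := by rw [hshift]; simp [hb2]
      apply pAinj x hxW x2 hx2W ((cons_eq_iff hb1 hb2).2 hnn)
      omega
    · exact absurd (hmixed x hxW x2 hx2W hb1 hb2 hnn heq) (fun q => q)
    · exact absurd (hmixed x2 hx2W x hxW hb2 hb1 hnn.symm heq.symm) (fun q => q)
    · have hMeq : Mrg A' b x = Mrg A' b x2 := by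
        ext e; rw [mem_Mrg, mem_Mrg, hnn]
      have hs1 : shift x = (Mrg A' b x).card := by rw [hshift]; simp [hb1]
      have hs2 : shift x2 = (Mrg A' b x2).card := by rw [hshift]; simp [hb2]
      have hNNeq : NN (b ::ₘ A') x = NN (b ::ₘ A') x2 := by
        rw [NN_cons_neg hb1, NN_cons_neg hb2]; exact hnn
      apply pAinj x hxW x2 hx2W hNNeq
      rw [hMeq] at hs1
      omega
  have hfibW' : ∀ x : C, W'.filter (fun e => NN A' e = NN A' x)
      = W'.filter (fun e => NN A' e = NN A' x) := fun _ => rfl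
  have hfible : ∀ P₀ ∈ M, (W.filter (fun x => NN A' x = P₀)).card
      ≤ (W'.filter (fun x => NN A' x = P₀)).card := by
    intro P₀ hP₀
    set n : ℕ := (W'.filter (fun x => NN A' x = P₀)).card with hn
    have hmaps : ∀ x ∈ W.filter (fun x => NN A' x = P₀),
        shift x + J x ∈ Finset.Icc 1 n := by
      intro x hx
      obtain ⟨hxW, hxg⟩ := Finset.mem_filter.1 hx
      have hlow : 1 ≤ shift x + J x := by have := pApos x hxW; omega
      have hup := hvB x hxW
      have hcongr2 : W'.filter (fun e => NN A' e = NN A' x)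
          = W'.filter (fun e => NN A' e = P₀) := by
        apply Finset.filter_congr
        intro e he
        rw [hxg]
      rw [hcongr2] at hup
      exact Finset.mem_Icc.2 ⟨hlow, hup⟩
    calc (W.filter (fun x => NN A' x = P₀)).card
        ≤ (Finset.Icc 1 n).card := Finset.card_le_card_of_injOn
          (fun x => shift x + J x) hmaps
          (fun a ha b2 hb2 h => hinjgen P₀ a (Finset.mem_coe.1 ha) b2 (Finset.mem_coe.1 hb2) h)
      _ = n := by rw [Nat.card_Icc]; omega
  have hstrict : (W.filter (fun x => NN A' x = NN A' cb)).card
      < (W'.filter (fun x => NN A' x = NN A' cb)).card := by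
    set n2 : ℕ := (W'.filter (fun x => NN A' x = NN A' cb)).card with hn2
    have hn2ge : r + 1 ≤ n2 := by
      have := hSr'
      omega
    have hmaps : ∀ x ∈ W.filter (fun x => NN A' x = NN A' cb),
        shift x + J x ∈ Finset.Icc 1 (n2 - 1) := by
      intro x hx
      obtain ⟨hxW, hxg⟩ := Finset.mem_filter.1 hx
      have hlow : 1 ≤ shift x + J x := by have := pApos x hxW; omega
      have hup := hvB x hxW
      have hcongr2 : W'.filter (fun e => NN A' e = NN A' x)
          = W'.filter (fun e => NN A' e = NN A' cb) := by
        apply Finset.filter_congr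
        intro e he
        rw [hxg]
      rw [hcongr2] at hup
      have hne : shift x + J x ≠ n2 := by
        intro hEQ
        have hA := hvA x hxW
        have hsl1 : sl A' x (shift x + J x) = sl A' cb (shift x + J x) := sl_congr hxg _
        have hsl2 : sl A' cb (r + 1) ≤ sl A' cb (shift x + J x) :=
          sl_mono hsupp'cb (by omega)
        rw [hsl1] at hA
        rw [hΛ'] at hA
        linarith
      exact Finset.mem_Icc.2 ⟨hlow, by omega⟩
    have hle2 : (W.filter (fun x => NN A' x = NN A' cb)).card ≤ n2 - 1 := by
      calc (W.filter (fun x => NN A' x = NN A' cb)).card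
          ≤ (Finset.Icc 1 (n2-1)).card := Finset.card_le_card_of_injOn
            (fun x => shift x + J x) hmaps
            (fun a ha b2 hb2 h => hinjgen (NN A' cb) a (Finset.mem_coe.1 ha)
              b2 (Finset.mem_coe.1 hb2) h)
        _ = n2 - 1 := by rw [Nat.card_Icc]; omega
    omega
  have hmemM : NN A' cb ∈ M := by
    rw [hM]
    refine Finset.mem_union_right _ ?_
    rw [Finset.mem_image]
    exact ⟨x', hx'W', hx'nn⟩
  have hlt2 : W.card < W'.card := by
    rw [h1, h2]
    exact Finset.sum_lt_sum hfible ⟨NN A' cb, hmemM, hstrict⟩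
  omega

end SeqPhrag
/-- seqPhragmén satisfies participation on laminar profiles: no voter can strictly
benefit from abstaining (w.r.t. Kelly's extension). -/
theorem seqPhragmen_participation_laminar
    {C : Type*} [DecidableEq C] [Fintype C] (hm : 1 < Fintype.card C)
    (A : Multiset (Finset C)) (hA : validProfile A) (hlam : Laminar A)
    (k : ℕ) (hk1 : 1 ≤ k) (hk2 : k < Fintype.card C)
    (b : Finset C) (hb : b ∈ A) :
    ¬ KellyStrict b (seqPhragmen (A.erase b) k) (seqPhragmen A k) := by
  rintro ⟨hweak, W1, hW1, W2, hW2, hltK⟩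
  obtain ⟨L1, hL1W, hL1len, hL1v⟩ := hW1
  obtain ⟨L2, hL2W, hL2len, hL2v⟩ := hW2
  have hlam' : Laminar (A.erase b) := SeqPhrag.laminar_of_le hlam (Multiset.erase_le b A)
  obtain ⟨J, Q1, Q2, Q3, Q4, Q5, Q6, Q7, Q8⟩ :=
    SeqPhrag.master_aux A hlam L2 (fun _ => 0) ∅ hL2v
      (by intro β hβ; simp) (by simp) (by simp)
  obtain ⟨J', R1, R2, R3, R4, R5, R6, R7, R8⟩ :=
    SeqPhrag.master_aux (A.erase b) hlam' L1 (fun _ => 0) ∅ hL1v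
      (by intro β hβ; simp) (by simp) (by simp)
  rw [Finset.empty_union, hL2W] at Q6 Q8
  rw [Finset.empty_union, hL1W] at R6 R8
  have hmem2 : ∀ c, c ∈ W2 → c ∈ L2 := fun c hc =>
    List.mem_toFinset.1 (by rw [hL2W]; exact hc)
  have hmem1 : ∀ c, c ∈ W1 → c ∈ L1 := fun c hc =>
    List.mem_toFinset.1 (by rw [hL1W]; exact hc)
  have hcard2 : W2.card = k := by rw [← hL2W, List.toFinset_card_of_nodup Q2, hL2len]
  have hcard1 : W1.card = k := by rw [← hL1W, List.toFinset_card_of_nodup R2, hL1len]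
  have hBA : b ::ₘ A.erase b = A := Multiset.cons_erase hb
  have pA1 : ∀ c ∈ W2, SeqPhrag.supp (b ::ₘ A.erase b) c := by
    rw [hBA]; exact fun c hc => Q4 c (hmem2 c hc)
  have pApos : ∀ c ∈ W2, 1 ≤ J c := by
    intro c hc
    have := Q5 c (hmem2 c hc)
    simp only [Finset.filter_empty, Finset.card_empty] at this
    omega
  have pAinj : ∀ c ∈ W2, ∀ c' ∈ W2,
      SeqPhrag.NN (b ::ₘ A.erase b) c = SeqPhrag.NN (b ::ₘ A.erase b) c' →
      J c = J c' → c = c' := by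
    rw [hBA]; exact fun c hc c' hc' => Q7 c (hmem2 c hc) c' (hmem2 c' hc')
  have pAle : ∀ c ∈ W2, J c ≤ (W2.filter (fun e =>
      SeqPhrag.NN (b ::ₘ A.erase b) e = SeqPhrag.NN (b ::ₘ A.erase b) c)).card := by
    rw [hBA]; exact fun c hc => Q6 c (hmem2 c hc)
  have pAkey : ∀ c ∈ W2, ∀ d, SeqPhrag.supp (b ::ₘ A.erase b) d → d ∉ W2 →
      SeqPhrag.sl (b ::ₘ A.erase b) c (J c) ≤ SeqPhrag.sl (b ::ₘ A.erase b) d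
        ((W2.filter (fun e =>
          SeqPhrag.NN (b ::ₘ A.erase b) e = SeqPhrag.NN (b ::ₘ A.erase b) d)).card + 1) := by
    rw [hBA]; exact fun c hc d hd hdW => Q8 c (hmem2 c hc) d hd hdW
  have pB1 : ∀ c ∈ W1, SeqPhrag.supp (A.erase b) c := fun c hc => R4 c (hmem1 c hc)
  have pBpos : ∀ c ∈ W1, 1 ≤ J' c := by
    intro c hc
    have := R5 c (hmem1 c hc)
    simp only [Finset.filter_empty, Finset.card_empty] at this
    omega
  have pBinj : ∀ c ∈ W1, ∀ c' ∈ W1,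
      SeqPhrag.NN (A.erase b) c = SeqPhrag.NN (A.erase b) c' → J' c = J' c' → c = c' :=
    fun c hc c' hc' => R7 c (hmem1 c hc) c' (hmem1 c' hc')
  have pBkey : ∀ c ∈ W1, ∀ d, SeqPhrag.supp (A.erase b) d → d ∉ W1 →
      SeqPhrag.sl (A.erase b) c (J' c) ≤ SeqPhrag.sl (A.erase b) d
        ((W1.filter (fun e =>
          SeqPhrag.NN (A.erase b) e = SeqPhrag.NN (A.erase b) d)).card + 1) :=
    fun c hc d hd hdW => R8 c (hmem1 c hc) d hd hdW
  exact SeqPhrag.endgame (A.erase b) b (by rw [hBA]; exact hlam) W2 W1 J J'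
    (by omega) pA1 pApos pAinj pAle pAkey pB1 pBpos pBinj pBkey hltK
end

section
/- The query function of every sequential Thiele rule with s(2) - s(1) < s(1) is concurring: for every profile A with |A_i| ≤ 2 for all i ∈ N_A and |N_A(c)| = |N_A(d)| ≤ n/k for all c,d ∈ C, every sequence (c_1,…,c_ℓ) of distinct candidates, and all candidates c,d ∉ {c_1,…,c_ℓ} such that |{i ∈ N_A : A_i = {c_j,d}}| ≥ |{i ∈ N_A : A_i = {c_j,c}}| for all j ≤ ℓ with at least one inequality strict, it holds that ŝ(A,{c_1,…,c_ℓ,d}) < ŝ(A,{c_1,…,c_ℓ,c}); in particular d does not maximize ŝ(A,{c_1,…,c_ℓ,·}) and is not selected next. -/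
/-- The Thiele score `ŝ(A,W) = Σ_{i ∈ N_A} s(|A_i ∩ W|)` of a committee `W`. -/
def thieleScore {C : Type*} [DecidableEq C] (s : ℕ → ℚ) (A : Multiset (Finset C))
    (W : Finset C) : ℚ :=
  (A.map fun b => s (b ∩ W).card).sum

/-- `seqThieleValid s A P L`: the sequence `L` is a valid continuation of the partial
committee `P` for the sequential Thiele rule induced by `s`: each entry maximizes the
Thiele score of the extended partial committee. -/
def seqThieleValid {C : Type*} [DecidableEq C] (s : ℕ → ℚ) (A : Multiset (Finset C)) :
    Finset C → List C → Prop
  | _, [] => True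
  | P, c :: rest =>
      c ∉ P ∧
      (∀ x : C, x ∉ P → thieleScore s A (insert x P) ≤ thieleScore s A (insert c P)) ∧
      seqThieleValid s A (insert c P) rest

/-- The sequential Thiele rule induced by the scoring function `s`. -/
def seqThiele {C : Type*} [DecidableEq C] (s : ℕ → ℚ) (A : Multiset (Finset C))
    (k : ℕ) : Set (Finset C) :=
  {W | ∃ L : List C, L.toFinset = W ∧ L.length = k ∧ seqThieleValid s A ∅ L}

/-- The approval score `|N_A(c)|` of a candidate. -/
def appScore {C : Type*} [DecidableEq C] (A : Multiset (Finset C)) (c : C) : ℕ :=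
  Multiset.card (A.filter fun b => c ∈ b)


lemma stc_inter_insert_card {C : Type*} [DecidableEq C] (b P : Finset C) (x : C) (hx : x ∉ P) :
    (b ∩ insert x P).card = (b ∩ P).card + (if x ∈ b then 1 else 0) := by
  split_ifs with h
  · have he : b ∩ insert x P = insert x (b ∩ P) := by
      ext y; simp only [Finset.mem_inter, Finset.mem_insert]
      constructor
      · rintro ⟨hyb, rfl | hyP⟩
        · exact Or.inl rfl
        · exact Or.inr ⟨hyb, hyP⟩
      · rintro (rfl | ⟨hyb, hyP⟩)
        · exact ⟨h, Or.inl rfl⟩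
        · exact ⟨hyb, Or.inr hyP⟩
    rw [he, Finset.card_insert_of_notMem (by simp [hx])]
  · have he : b ∩ insert x P = b ∩ P := by
      ext y; simp only [Finset.mem_inter, Finset.mem_insert]
      constructor
      · rintro ⟨hyb, rfl | hyP⟩
        · exact absurd hyb h
        · exact ⟨hyb, hyP⟩
      · rintro ⟨hyb, hyP⟩; exact ⟨hyb, Or.inr hyP⟩
    rw [he]; omega

lemma stc_pair_iff {C : Type*} [DecidableEq C] (b : Finset C) (hb : b.card ≤ 2)
    (x cj : C) (hne : cj ≠ x) : b = {cj, x} ↔ cj ∈ b ∧ x ∈ b := by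
  constructor
  · rintro rfl; simp
  · rintro ⟨h1, h2⟩
    have hsub : ({cj, x} : Finset C) ⊆ b := by
      intro y hy; simp at hy; rcases hy with rfl | rfl <;> assumption
    have hcard : ({cj, x} : Finset C).card = 2 := by
      rw [Finset.card_insert_of_notMem (by simpa), Finset.card_singleton]
    exact (Finset.eq_of_subset_of_card_le hsub (by omega)).symm

lemma stc_sum_indic {C : Type*} [DecidableEq C] (P : Finset C) (x : C) (hx : x ∉ P)
    (b : Finset C) (hb : b.card ≤ 2) :
    ∑ cj ∈ P, (if b = {cj, x} then (1 : ℚ) else 0)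
      = if x ∈ b then ((b ∩ P).card : ℚ) else 0 := by
  have h1 : ∀ cj ∈ P, (if b = {cj, x} then (1 : ℚ) else 0)
      = if cj ∈ b ∧ x ∈ b then 1 else 0 := by
    intro cj hcj
    have : b = {cj, x} ↔ cj ∈ b ∧ x ∈ b :=
      stc_pair_iff b hb x cj (fun h => hx (h ▸ hcj))
    simp [this]
  rw [Finset.sum_congr rfl h1]
  by_cases hxb : x ∈ b
  · simp only [hxb, and_true]
    rw [Finset.sum_boole, Finset.filter_mem_eq_inter, Finset.inter_comm]
    simp
  · simp [hxb]

lemma stc_ballot {C : Type*} [DecidableEq C] (s : ℕ → ℚ) (h0 : s 0 = 0) (P : Finset C)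
    (c d : C) (hcP : c ∉ P) (hdP : d ∉ P) (hcd : c ≠ d) (b : Finset C) (hb : b.card ≤ 2) :
    s ((b ∩ insert c P).card) - s ((b ∩ insert d P).card)
      = ((if c ∈ b then (1 : ℚ) else 0) - (if d ∈ b then (1 : ℚ) else 0)) * s 1
        + ((if d ∈ b then ((b ∩ P).card : ℚ) else 0)
            - (if c ∈ b then ((b ∩ P).card : ℚ) else 0)) * (2 * s 1 - s 2) := by
  rw [stc_inter_insert_card b P c hcP, stc_inter_insert_card b P d hdP]
  have herase : ∀ x : C, x ∈ b → x ∉ P → (b ∩ P).card ≤ 1 := by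
    intro x hxb hxP
    have hsub : b ∩ P ⊆ b.erase x := by
      intro y hy
      rcases Finset.mem_inter.mp hy with ⟨h1, h2⟩
      exact Finset.mem_erase.mpr ⟨fun h => hxP (h ▸ h2), h1⟩
    have := Finset.card_le_card hsub
    have := Finset.card_erase_le (a := x) (s := b)
    have hpos : 0 < b.card := Finset.card_pos.mpr ⟨x, hxb⟩
    have := Finset.card_erase_of_mem hxb
    omega
  by_cases hcb : c ∈ b <;> by_cases hdb : d ∈ b
  · have hbeq : b = {c, d} := (stc_pair_iff b hb d c hcd).mpr ⟨hcb, hdb⟩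
    have hm : b ∩ P = ∅ := by
      subst hbeq
      ext y
      simp only [Finset.mem_inter, Finset.mem_insert, Finset.mem_singleton,
        Finset.notMem_empty, iff_false, not_and]
      rintro (rfl | rfl) <;> assumption
    simp only [hm, Finset.card_empty, hcb, hdb, if_true]
    push_cast
    ring
  · rcases Nat.le_one_iff_eq_zero_or_eq_one.mp (herase c hcb hcP) with h | h <;>
      simp only [h, hcb, hdb, if_true, if_false] <;> push_cast <;> [skip; skip] <;>
      simp [h0] <;> ring
  · rcases Nat.le_one_iff_eq_zero_or_eq_one.mp (herase d hdb hdP) with h | h <;>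
      simp only [h, hcb, hdb, if_true, if_false] <;> push_cast <;>
      simp [h0] <;> ring
  · simp only [hcb, hdb, if_false]
    ring

lemma stc_master {C : Type*} [DecidableEq C] (s : ℕ → ℚ) (h0 : s 0 = 0) (P : Finset C)
    (c d : C) (hcP : c ∉ P) (hdP : d ∉ P) (hcd : c ≠ d) :
    ∀ A : Multiset (Finset C), (∀ b ∈ A, b.card ≤ 2) →
    thieleScore s A (insert c P) - thieleScore s A (insert d P)
      = ((appScore A c : ℚ) - (appScore A d : ℚ)) * s 1
        + ((∑ cj ∈ P, (Multiset.count ({cj, d} : Finset C) A : ℚ))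
            - ∑ cj ∈ P, (Multiset.count ({cj, c} : Finset C) A : ℚ)) * (2 * s 1 - s 2) := by
  intro A
  induction A using Multiset.induction_on with
  | empty => intro _; simp [thieleScore, appScore]
  | cons b A ih =>
    intro h
    have hb := h b (Multiset.mem_cons_self b A)
    have hA : ∀ b' ∈ A, b'.card ≤ 2 := fun b' hb' => h b' (Multiset.mem_cons_of_mem hb')
    have key := stc_ballot s h0 P c d hcP hdP hcd b hb
    have hthiele : ∀ W : Finset C,
        thieleScore s (b ::ₘ A) W = s ((b ∩ W).card) + thieleScore s A W := by
      intro W; simp [thieleScore]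
    have happ : ∀ x : C, (appScore (b ::ₘ A) x : ℚ)
        = (if x ∈ b then (1 : ℚ) else 0) + (appScore A x : ℚ) := by
      intro x
      simp only [appScore, Multiset.filter_cons]
      split_ifs <;> simp <;> push_cast <;> ring
    have hsum : ∀ x : C, x ∉ P →
        ∑ cj ∈ P, (Multiset.count ({cj, x} : Finset C) (b ::ₘ A) : ℚ)
          = (∑ cj ∈ P, (Multiset.count ({cj, x} : Finset C) A : ℚ))
            + (if x ∈ b then ((b ∩ P).card : ℚ) else 0) := by
      intro x hx
      rw [← stc_sum_indic P x hx b hb, ← Finset.sum_add_distrib]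
      refine Finset.sum_congr rfl fun cj hcj => ?_
      rw [Multiset.count_cons]
      by_cases hbe : b = {cj, x}
      · simp [hbe]
      · rw [if_neg (fun h => hbe h.symm), if_neg hbe]
        push_cast
        ring
    rw [hthiele, hthiele, happ, happ, hsum c hcP, hsum d hdP]
    linear_combination key + ih hA

/-- The query function of every sequential Thiele rule with `s(2) - s(1) < s(1)` is
concurring: in a profile with ballots of size at most 2 in which all candidates have
the same approval score, which is at most `n/k`, if `d` shares at least as many ballots
as `c` with each previously chosen candidate `c_j` (strictly more with some `c_j`),
then `ŝ(A,{c₁,…,c_ℓ,d}) < ŝ(A,{c₁,…,c_ℓ,c})`; in particular `d` does not maximize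
`ŝ(A,{c₁,…,c_ℓ,·})` and is not selected next. -/
theorem seqThiele_concurring
    {C : Type*} [DecidableEq C] [Fintype C]
    (s : ℕ → ℚ) (h0 : s 0 = 0) (h1 : 0 < s 1)
    (hmono : ∀ x : ℕ, s x ≤ s (x + 1))
    (hconcave : ∀ x : ℕ, s (x + 2) - s (x + 1) ≤ s (x + 1) - s x)
    (hAV : s 2 - s 1 < s 1)
    (A : Multiset (Finset C)) (hA : validProfile A)
    (hsize : ∀ b ∈ A, b.card ≤ 2)
    (k : ℕ) (hk : 1 ≤ k)
    (heq : ∀ c d : C, appScore A c = appScore A d)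
    (hnk : ∀ c : C, appScore A c * k ≤ Multiset.card A)
    (L : List C) (hnd : L.Nodup)
    (c d : C) (hc : c ∉ L) (hd : d ∉ L)
    (hge : ∀ cj ∈ L, Multiset.count ({cj, c} : Finset C) A ≤
                     Multiset.count ({cj, d} : Finset C) A)
    (hstr : ∃ cj ∈ L, Multiset.count ({cj, c} : Finset C) A <
                      Multiset.count ({cj, d} : Finset C) A) :
    thieleScore s A (insert d L.toFinset) < thieleScore s A (insert c L.toFinset) ∧
    ¬ (∀ x : C, x ∉ L.toFinset →
        thieleScore s A (insert x L.toFinset) ≤ thieleScore s A (insert d L.toFinset)) := by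
  have hcd : c ≠ d := by
    rintro rfl
    obtain ⟨cj, _, hlt⟩ := hstr
    exact lt_irrefl _ hlt
  have hcP : c ∉ L.toFinset := fun h => hc (List.mem_toFinset.mp h)
  have hdP : d ∉ L.toFinset := fun h => hd (List.mem_toFinset.mp h)
  have master := stc_master s h0 L.toFinset c d hcP hdP hcd A hsize
  have hFlt : (∑ cj ∈ L.toFinset, Multiset.count ({cj, c} : Finset C) A)
      < ∑ cj ∈ L.toFinset, Multiset.count ({cj, d} : Finset C) A := by
    obtain ⟨cj, hcj, hlt⟩ := hstr
    exact Finset.sum_lt_sum (fun i hi => hge i (List.mem_toFinset.mp hi))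
      ⟨cj, List.mem_toFinset.mpr hcj, hlt⟩
  have hFltQ : (∑ cj ∈ L.toFinset, (Multiset.count ({cj, c} : Finset C) A : ℚ))
      < ∑ cj ∈ L.toFinset, (Multiset.count ({cj, d} : Finset C) A : ℚ) := by
    exact_mod_cast hFlt
  have hslope : (0 : ℚ) < 2 * s 1 - s 2 := by linarith
  have happ : (appScore A c : ℚ) = (appScore A d : ℚ) := by
    exact_mod_cast heq c d
  have hpos := mul_pos (sub_pos.mpr hFltQ) hslope
  have hmain : thieleScore s A (insert d L.toFinset) < thieleScore s A (insert c L.toFinset) := by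
    nlinarith [master, hpos, happ]
  refine ⟨hmain, fun h => ?_⟩
  exact absurd (h c hcP) (not_le.mpr hmain)
end

section
/- The query function of seqPhragmén is concurring: for every profile A with |A_i| ≤ 2 for all i ∈ N_A and |N_A(c)| = |N_A(d)| ≤ n/k for all c,d ∈ C, every sequence (c_1,…,c_ℓ) of distinct candidates that is valid for the seqPhragmén process on A, and all candidates c,d ∉ {c_1,…,c_ℓ} such that |{i ∈ N_A : A_i = {c_j,d}}| ≥ |{i ∈ N_A : A_i = {c_j,c}}| for all j ≤ ℓ with at least one inequality strict, it holds that ℓ_{ℓ+1}(d) > ℓ_{ℓ+1}(c); in particular d does not minimize ℓ_{ℓ+1} and is not elected next. -/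
/-- One step of the seqPhragmén load update after electing `c`. -/
def phragStep {C : Type*} [DecidableEq C] (A : Multiset (Finset C))
    (y : Finset C → ℚ) (c : C) : Finset C → ℚ :=
  fun b => if c ∈ b then phragLoadVal A y c else y b

/-- The voter loads after electing the sequence `L` (in order), starting from loads 0. -/
def phragLoadsAfter {C : Type*} [DecidableEq C] (A : Multiset (Finset C))
    (L : List C) : Finset C → ℚ :=
  L.foldl (phragStep A) (fun _ => 0)

section Aux

variable {C : Type*} [DecidableEq C]

/-- The load value assigned when `x` is elected along the sequence `L`, starting
from loads `y`. -/
def loadAt (A : Multiset (Finset C)) : List C → (Finset C → ℚ) → C → ℚ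
  | [], _, _ => 0
  | e :: rest, y, x =>
      if x = e then phragLoadVal A y e else loadAt A rest (phragStep A y e) x

lemma foldl_phragStep_const (A : Multiset (Finset C)) :
    ∀ (L : List C) (y : Finset C → ℚ) (b : Finset C), (∀ e ∈ L, e ∉ b) →
      L.foldl (phragStep A) y b = y b
  | [], _, _, _ => rfl
  | e :: rest, y, b, h => by
      have he : e ∉ b := h e (List.mem_cons_self)
      have := foldl_phragStep_const A rest (phragStep A y e) b
        (fun e' he' => h e' (List.mem_cons_of_mem _ he'))
      simpa [List.foldl_cons, phragStep, he] using this

lemma foldl_phragStep_eq_loadAt (A : Multiset (Finset C)) :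
    ∀ (L : List C) (y : Finset C → ℚ) (x : C) (b : Finset C), L.Nodup → x ∈ L → x ∈ b →
      (∀ e ∈ L, e ∈ b → e = x) → L.foldl (phragStep A) y b = loadAt A L y x
  | [], _, _, _, _, hx, _, _ => absurd hx (List.not_mem_nil)
  | e :: rest, y, x, b, hnd, hx, hxb, huniq => by
      by_cases hxe : x = e
      · subst hxe
        have hrest : ∀ e' ∈ rest, e' ∉ b := by
          intro e' he' hmem
          have : e' = x := huniq e' (List.mem_cons_of_mem _ he') hmem
          exact (List.nodup_cons.1 hnd).1 (this ▸ he')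
        have := foldl_phragStep_const A rest (phragStep A y x) b hrest
        simp only [List.foldl_cons] at *
        rw [this, loadAt]
        simp [phragStep, hxb]
      · have hxrest : x ∈ rest := by
          rcases List.mem_cons.1 hx with h | h
          · exact absurd h hxe
          · exact h
        have heb : e ∉ b := fun hmem =>
          hxe ((huniq e (List.mem_cons_self) hmem).symm)
        rw [List.foldl_cons, loadAt, if_neg hxe]
        exact foldl_phragStep_eq_loadAt A rest (phragStep A y e) x b
          (List.nodup_cons.1 hnd).2 hxrest hxb
          (fun e' he' => huniq e' (List.mem_cons_of_mem _ he'))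

lemma phragLoadVal_nonneg (A : Multiset (Finset C)) (y : Finset C → ℚ)
    (hy : ∀ b, 0 ≤ y b) (c : C) : 0 ≤ phragLoadVal A y c := by
  unfold phragLoadVal
  apply div_nonneg
  · have : 0 ≤ ((A.filter fun b => c ∈ b).map y).sum :=
      Multiset.sum_nonneg (by
        intro q hq
        obtain ⟨b, _, rfl⟩ := Multiset.mem_map.1 hq
        exact hy b)
    linarith
  · exact Nat.cast_nonneg _

lemma phragLoadVal_pos (A : Multiset (Finset C)) (y : Finset C → ℚ)
    (hy : ∀ b, 0 ≤ y b) (c : C)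
    (hcard : 1 ≤ Multiset.card (A.filter fun b => c ∈ b)) :
    0 < phragLoadVal A y c := by
  unfold phragLoadVal
  apply div_pos
  · have : 0 ≤ ((A.filter fun b => c ∈ b).map y).sum :=
      Multiset.sum_nonneg (by
        intro q hq
        obtain ⟨b, _, rfl⟩ := Multiset.mem_map.1 hq
        exact hy b)
    linarith
  · exact_mod_cast hcard

lemma phragStep_nonneg (A : Multiset (Finset C)) (y : Finset C → ℚ)
    (hy : ∀ b, 0 ≤ y b) (e : C) : ∀ b, 0 ≤ phragStep A y e b := by
  intro b
  unfold phragStep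
  split
  · exact phragLoadVal_nonneg A y hy e
  · exact hy b

lemma loadAt_pos (A : Multiset (Finset C))
    (hs : ∀ e : C, 1 ≤ Multiset.card (A.filter fun b => e ∈ b)) :
    ∀ (L : List C) (y : Finset C → ℚ) (x : C), (∀ b, 0 ≤ y b) → x ∈ L →
      0 < loadAt A L y x
  | [], _, x, _, hx => absurd hx (List.not_mem_nil)
  | e :: rest, y, x, hy, hx => by
      rw [loadAt]
      by_cases hxe : x = e
      · rw [if_pos hxe]
        exact phragLoadVal_pos A y hy e (hs e)
      · rw [if_neg hxe]
        have hxrest : x ∈ rest := by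
          rcases List.mem_cons.1 hx with h | h
          · exact absurd h hxe
          · exact h
        exact loadAt_pos A hs rest (phragStep A y e) x (phragStep_nonneg A y hy e) hxrest

lemma list_sum_indicator (v : C → ℚ) :
    ∀ (L : List C), L.Nodup → ∀ x ∈ L,
      (L.map fun cj => if cj = x then v cj else 0).sum = v x
  | [], _, x, hx => absurd hx (List.not_mem_nil)
  | e :: rest, hnd, x, hx => by
      by_cases hex : e = x
      · subst hex
        have he : e ∉ rest := (List.nodup_cons.1 hnd).1
        have hz : (rest.map fun cj => if cj = e then v cj else 0).sum = 0 := by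
          apply List.sum_eq_zero
          intro q hq
          obtain ⟨cj, hcj, rfl⟩ := List.mem_map.1 hq
          have : cj ≠ e := fun h => he (h ▸ hcj)
          simp [this]
        simp [hz]
      · have hxrest : x ∈ rest := by
          rcases List.mem_cons.1 hx with h | h
          · exact absurd h.symm hex
          · exact h
        have := list_sum_indicator v rest (List.nodup_cons.1 hnd).2 x hxrest
        simp [hex, this]

lemma multiset_sum_indicator (A : Multiset (Finset C)) (B : Finset C) (v : ℚ) :
    (A.map fun b => if b = B then v else 0).sum = (Multiset.count B A : ℚ) * v := by
  induction A using Multiset.induction_on with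
  | empty => simp
  | cons a s ih =>
      rw [Multiset.map_cons, Multiset.sum_cons, ih, Multiset.count_cons]
      by_cases h : a = B
      · subst h; simp [add_mul]; ring
      · have h' : ¬ B = a := fun hh => h hh.symm
        simp [h, h']

lemma multiset_list_sum_swap (A : Multiset (Finset C)) (g : C → Finset C → ℚ) :
    ∀ (L : List C),
      (A.map fun b => (L.map fun cj => g cj b).sum).sum
        = (L.map fun cj => (A.map fun b => g cj b).sum).sum
  | [] => by simp
  | cj :: rest => by
      have ih := multiset_list_sum_swap A g rest
      simp only [List.map_cons, List.sum_cons, ← ih]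
      rw [← Multiset.sum_map_add]

lemma sum_map_filter (A : Multiset (Finset C)) (p : Finset C → Prop) [DecidablePred p]
    (f : Finset C → ℚ) :
    ((A.filter p).map f).sum = (A.map fun b => if p b then f b else 0).sum := by
  induction A using Multiset.induction_on with
  | empty => simp
  | cons a s ih =>
      by_cases h : p a <;> simp [Multiset.filter_cons, h, ih]

lemma key_sum (A : Multiset (Finset C)) (hsize : ∀ b ∈ A, b.card ≤ 2)
    (L : List C) (hnd : L.Nodup) (c : C) (hc : c ∉ L) :
    ((A.filter fun b => c ∈ b).map (phragLoadsAfter A L)).sum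
      = (L.map fun cj =>
          (Multiset.count ({cj, c} : Finset C) A : ℚ) * loadAt A L (fun _ => 0) cj).sum := by
  have step1 : ((A.filter fun b => c ∈ b).map (phragLoadsAfter A L)).sum
      = (A.map fun b => if c ∈ b then phragLoadsAfter A L b else 0).sum :=
    sum_map_filter A _ _
  rw [step1]
  have step2 : (A.map fun b => if c ∈ b then phragLoadsAfter A L b else 0).sum
      = (A.map fun b =>
          (L.map fun cj => if b = ({cj, c} : Finset C) then loadAt A L (fun _ => 0) cj else 0).sum).sum := by
    apply congrArg
    apply Multiset.map_congr rfl
    intro b hb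
    by_cases hcb : c ∈ b
    · rw [if_pos hcb]
      by_cases hbl : ∃ x ∈ L, x ∈ b
      · obtain ⟨x, hxL, hxb⟩ := hbl
        have hxc : x ≠ c := fun h => hc (h ▸ hxL)
        have hsub : ({x, c} : Finset C) ⊆ b := by
          intro z hz
          rcases Finset.mem_insert.1 hz with rfl | hz
          · exact hxb
          · exact (Finset.mem_singleton.1 hz) ▸ hcb
        have hcard2 : ({x, c} : Finset C).card = 2 := by
          rw [Finset.card_insert_of_notMem (by simpa using hxc), Finset.card_singleton]
        have hbeq : ({x, c} : Finset C) = b :=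
          Finset.eq_of_subset_of_card_le hsub (by rw [hcard2]; exact hsize b hb)
        have huniq : ∀ e ∈ L, e ∈ b → e = x := by
          intro e heL heb
          rw [← hbeq] at heb
          rcases Finset.mem_insert.1 heb with h | h
          · exact h
          · exact absurd ((Finset.mem_singleton.1 h) ▸ heL) hc
        have hfold : phragLoadsAfter A L b = loadAt A L (fun _ => 0) x :=
          foldl_phragStep_eq_loadAt A L (fun _ => 0) x b hnd hxL hxb huniq
        rw [hfold]
        have hind : ∀ cj ∈ L,
            (if b = ({cj, c} : Finset C) then loadAt A L (fun _ => 0) cj else 0)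
              = (if cj = x then loadAt A L (fun _ => 0) cj else 0) := by
          intro cj hcjL
          have hcjc : cj ≠ c := fun h => hc (h ▸ hcjL)
          by_cases hcjx : cj = x
          · subst hcjx; simp [hbeq.symm]
          · have : b ≠ ({cj, c} : Finset C) := by
              intro h
              rw [← hbeq] at h
              have : cj ∈ ({x, c} : Finset C) := h ▸ Finset.mem_insert_self cj {c}
              rcases Finset.mem_insert.1 this with h' | h'
              · exact hcjx h'
              · exact hcjc (Finset.mem_singleton.1 h')
            simp [this, hcjx]
        rw [List.map_congr_left hind, list_sum_indicator _ L hnd x hxL]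
      · push_neg at hbl
        have h0 : phragLoadsAfter A L b = 0 :=
          foldl_phragStep_const A L (fun _ => 0) b (fun e he => hbl e he)
        rw [h0]
        symm
        apply List.sum_eq_zero
        intro q hq
        obtain ⟨cj, hcjL, rfl⟩ := List.mem_map.1 hq
        have : b ≠ ({cj, c} : Finset C) := by
          intro h
          exact hbl cj hcjL (h ▸ Finset.mem_insert_self cj {c})
        simp [this]
    · rw [if_neg hcb]
      symm
      apply List.sum_eq_zero
      intro q hq
      obtain ⟨cj, hcjL, rfl⟩ := List.mem_map.1 hq
      have : b ≠ ({cj, c} : Finset C) := by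
        intro h
        exact hcb (h ▸ Finset.mem_insert.2 (Or.inr (Finset.mem_singleton_self c)))
      simp [this]
  rw [step2, multiset_list_sum_swap]
  apply congrArg
  apply List.map_congr_left
  intro cj _
  exact multiset_sum_indicator A ({cj, c} : Finset C) (loadAt A L (fun _ => 0) cj)

end Aux

/-- The query function of seqPhragmén is concurring: in a profile with ballots of size
at most 2 in which all candidates have the same approval score, which is at most `n/k`,
if the sequence `(c₁,…,c_ℓ)` is valid for the seqPhragmén process and `d` shares at
least as many ballots as `c` with each `c_j` (strictly more with some `c_j`), then
`ℓ_{ℓ+1}(c) < ℓ_{ℓ+1}(d)`; in particular `d` does not minimize `ℓ_{ℓ+1}` and is not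
elected next. -/
theorem seqPhragmen_concurring
    {C : Type*} [DecidableEq C] [Fintype C]
    (A : Multiset (Finset C)) (hA : validProfile A)
    (hsize : ∀ b ∈ A, b.card ≤ 2)
    (k : ℕ) (hk : 1 ≤ k)
    (heq : ∀ c d : C, appScore A c = appScore A d)
    (hnk : ∀ c : C, appScore A c * k ≤ Multiset.card A)
    (L : List C) (hnd : L.Nodup)
    (hvalid : phragValid A (fun _ => 0) ∅ L)
    (c d : C) (hc : c ∉ L) (hd : d ∉ L)
    (hge : ∀ cj ∈ L, Multiset.count ({cj, c} : Finset C) A ≤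
                     Multiset.count ({cj, d} : Finset C) A)
    (hstr : ∃ cj ∈ L, Multiset.count ({cj, c} : Finset C) A <
                      Multiset.count ({cj, d} : Finset C) A) :
    phragLoadVal A (phragLoadsAfter A L) c < phragLoadVal A (phragLoadsAfter A L) d ∧
    ¬ (∀ e : C, e ∉ L.toFinset → (A.filter fun b => e ∈ b) ≠ 0 →
        phragLoadVal A (phragLoadsAfter A L) d ≤ phragLoadVal A (phragLoadsAfter A L) e) := by
  have hs1 : ∀ e : C, 1 ≤ Multiset.card (A.filter fun b => e ∈ b) := by
    obtain ⟨hne, hball⟩ := hA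
    obtain ⟨b, hb⟩ := Multiset.exists_mem_of_ne_zero hne
    obtain ⟨e0, he0⟩ := Finset.nonempty_iff_ne_empty.2 (hball b hb)
    have hmem : b ∈ A.filter fun b => e0 ∈ b := Multiset.mem_filter.2 ⟨hb, he0⟩
    have h0 : 0 < Multiset.card (A.filter fun b => e0 ∈ b) :=
      Multiset.card_pos_iff_exists_mem.2 ⟨b, hmem⟩
    intro e
    have := heq e e0
    unfold appScore at this
    omega
  have hload : ∀ x ∈ L, 0 < loadAt A L (fun _ => 0) x := fun x hx =>
    loadAt_pos A hs1 L (fun _ => 0) x (fun _ => le_refl 0) hx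
  have hsumlt : ((A.filter fun b => c ∈ b).map (phragLoadsAfter A L)).sum
      < ((A.filter fun b => d ∈ b).map (phragLoadsAfter A L)).sum := by
    rw [key_sum A hsize L hnd c hc, key_sum A hsize L hnd d hd]
    apply List.sum_lt_sum
    · intro cj hcj
      exact mul_le_mul_of_nonneg_right (by exact_mod_cast hge cj hcj)
        (le_of_lt (hload cj hcj))
    · obtain ⟨cj, hcj, hlt⟩ := hstr
      exact ⟨cj, hcj, mul_lt_mul_of_pos_right (by exact_mod_cast hlt) (hload cj hcj)⟩
  have hmain : phragLoadVal A (phragLoadsAfter A L) c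
      < phragLoadVal A (phragLoadsAfter A L) d := by
    unfold phragLoadVal
    have hcd : Multiset.card (A.filter fun b => c ∈ b)
        = Multiset.card (A.filter fun b => d ∈ b) := heq c d
    rw [← hcd]
    have hpos : (0:ℚ) < (Multiset.card (A.filter fun b => c ∈ b) : ℚ) := by
      exact_mod_cast hs1 c
    exact (div_lt_div_iff_of_pos_right hpos).2 (by linarith)
  refine ⟨hmain, ?_⟩
  intro h
  have hcfin : c ∉ L.toFinset := by simpa using hc
  have hfne : (A.filter fun b => c ∈ b) ≠ 0 := by
    intro h0
    have := hs1 c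
    rw [h0] at this
    simp at this
  exact absurd (h c hcfin hfne) (not_le.2 hmain)
end

section
/- seqPhragmén satisfies continuity in the following sense: let A and A' be approval profiles on disjoint voter sets, fix a sequence (c_1,…,c_{r-1}) of distinct candidates each of which is approved by at least one voter of A, let y_j and ℓ_j denote the loads and load values computed in profile A when exactly this sequence is elected, and let y*_j and ℓ*_j denote the corresponding quantities computed in the profile λA + A' (λ copies of each voter of A plus all voters of A'). Then for every candidate c ∉ {c_1,…,c_{r-1}} with N_A(c) ≠ ∅, λ·ℓ*_r(c) converges to ℓ_r(c) as λ → ∞ (and λ·y*_r(i) converges to y_r(i) for every voter i of A). -/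
open Filter in
lemma tendsto_multiset_sum' {α : Type*} (s : Multiset α) (f : ℕ → α → ℚ) (g : α → ℚ)
    (h : ∀ a, Tendsto (fun n => f n a) atTop (nhds (g a))) :
    Tendsto (fun n => ((s.map (f n)).sum)) atTop (nhds ((s.map g).sum)) := by
  induction s using Multiset.induction with
  | empty => simpa using tendsto_const_nhds
  | cons a t ih =>
    simp only [Multiset.map_cons, Multiset.sum_cons]
    exact (h a).add ih

lemma multiset_sum_nsmul {α : Type*} [AddCommMonoid α] (n : ℕ) (s : Multiset α) :
    (n • s).sum = n • s.sum := by
  induction n with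
  | zero => simp
  | succ k ih => simp [succ_nsmul, ih]

open Filter in
lemma key_loadVal {C : Type*} [DecidableEq C] (A A' : Multiset (Finset C))
    (F : ℕ → Finset C → ℚ) (y : Finset C → ℚ)
    (hF : ∀ b, Tendsto (fun lam : ℕ => (lam : ℚ) * F lam b) atTop (nhds (y b)))
    (c : C) (hc : (A.filter fun b => c ∈ b) ≠ 0) :
    Tendsto (fun lam : ℕ => (lam : ℚ) * phragLoadVal (lam • A + A') (F lam) c)
      atTop (nhds (phragLoadVal A y c)) := by
  set s := A.filter fun b => c ∈ b with hs
  set t := A'.filter fun b => c ∈ b with ht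
  have hn : (0 : ℚ) < (Multiset.card s : ℚ) := by
    exact_mod_cast Multiset.card_pos.2 hc
  have hu : Tendsto (fun lam : ℕ => (s.map (fun b => (lam : ℚ) * F lam b)).sum) atTop
      (nhds ((s.map y).sum)) := tendsto_multiset_sum' s _ _ hF
  have hv : Tendsto (fun lam : ℕ => (t.map (fun b => (lam : ℚ) * F lam b)).sum) atTop
      (nhds ((t.map y).sum)) := tendsto_multiset_sum' t _ _ hF
  have hinv : Tendsto (fun lam : ℕ => ((lam : ℚ))⁻¹) atTop (nhds 0) :=
    tendsto_inv_atTop_zero.comp tendsto_natCast_atTop_atTop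
  have hden : Tendsto (fun lam : ℕ =>
      (Multiset.card s : ℚ) + (Multiset.card t : ℚ) * ((lam : ℚ))⁻¹) atTop
      (nhds ((Multiset.card s : ℚ))) := by
    have h1 : Tendsto (fun lam : ℕ => (Multiset.card t : ℚ) * ((lam : ℚ))⁻¹) atTop
        (nhds 0) := by simpa using hinv.const_mul ((Multiset.card t : ℚ))
    simpa using tendsto_const_nhds.add h1
  have hnum : Tendsto (fun lam : ℕ =>
      1 + (s.map (fun b => (lam : ℚ) * F lam b)).sum
        + (t.map (fun b => (lam : ℚ) * F lam b)).sum * ((lam : ℚ))⁻¹) atTop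
      (nhds (1 + (s.map y).sum)) := by
    have h1 : Tendsto (fun _ : ℕ => (1 : ℚ)) atTop (nhds 1) := tendsto_const_nhds
    have := (h1.add hu).add (hv.mul hinv)
    simpa using this
  have hmain := hnum.div hden (ne_of_gt hn)
  refine hmain.congr' ?_
  filter_upwards [eventually_ge_atTop 1] with lam hlam
  have hlamQ : ((lam : ℚ)) ≠ 0 := by
    have : (0 : ℚ) < (lam : ℚ) := by exact_mod_cast hlam
    exact ne_of_gt this
  have hfilter : ((lam • A + A').filter fun b => c ∈ b) = lam • s + t := by
    rw [Multiset.filter_add, Multiset.filter_nsmul]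
  have hsum : (((lam • A + A').filter fun b => c ∈ b).map (F lam)).sum
      = (lam : ℚ) * (s.map (F lam)).sum + (t.map (F lam)).sum := by
    rw [hfilter, Multiset.map_add, Multiset.sum_add, Multiset.map_nsmul,
      multiset_sum_nsmul, nsmul_eq_mul]
  have hcard : ((Multiset.card ((lam • A + A').filter fun b => c ∈ b)) : ℚ)
      = (lam : ℚ) * (Multiset.card s : ℚ) + (Multiset.card t : ℚ) := by
    rw [hfilter]
    push_cast [Multiset.card_add, Multiset.card_nsmul]
    ring
  have hS : (s.map (fun b => (lam : ℚ) * F lam b)).sum = (lam : ℚ) * (s.map (F lam)).sum :=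
    Multiset.sum_map_mul_left
  have hT : (t.map (fun b => (lam : ℚ) * F lam b)).sum = (lam : ℚ) * (t.map (F lam)).sum :=
    Multiset.sum_map_mul_left
  have hdenpos : (lam : ℚ) * (Multiset.card s : ℚ) + (Multiset.card t : ℚ) ≠ 0 := by
    have h1 : (0 : ℚ) < (lam : ℚ) * (Multiset.card s : ℚ) := by
      have : (0 : ℚ) < (lam : ℚ) := by exact_mod_cast hlam
      positivity
    have h2 : (0 : ℚ) ≤ (Multiset.card t : ℚ) := by positivity
    linarith
  simp only [Pi.div_apply]
  unfold phragLoadVal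
  rw [hsum, hcard, hS, hT]
  field_simp
  ring

open Filter in
lemma foldl_tendsto {C : Type*} [DecidableEq C] (A A' : Multiset (Finset C)) :
    ∀ (L : List C), (∀ c ∈ L, (A.filter fun b => c ∈ b) ≠ 0) →
    ∀ (F : ℕ → Finset C → ℚ) (y : Finset C → ℚ),
    (∀ b, Tendsto (fun lam : ℕ => (lam : ℚ) * F lam b) atTop (nhds (y b))) →
    ∀ b, Tendsto (fun lam : ℕ => (lam : ℚ) * L.foldl (phragStep (lam • A + A')) (F lam) b)
      atTop (nhds (L.foldl (phragStep A) y b))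
  | [], _, F, y, hF, b => by simpa using hF b
  | c :: rest, hs, F, y, hF, b => by
    have hc := hs c List.mem_cons_self
    have hF' : ∀ b, Tendsto
        (fun lam : ℕ => (lam : ℚ) * phragStep (lam • A + A') (F lam) c b) atTop
        (nhds (phragStep A y c b)) := by
      intro b
      unfold phragStep
      by_cases hb : c ∈ b
      · simpa [hb] using key_loadVal A A' F y hF c hc
      · simpa [hb] using hF b
    simpa using foldl_tendsto A A' rest (fun d hd => hs d (List.mem_cons_of_mem _ hd))
      (fun lam => phragStep (lam • A + A') (F lam) c) (phragStep A y c) hF' b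

/-- seqPhragmén satisfies continuity: fix profiles `A`, `A'` and a sequence `L` of
distinct candidates each approved by some voter of `A`, and consider the loads
computed when exactly this sequence is elected, in `A` and in `λA + A'` (λ copies of
each voter of `A` plus all voters of `A'`). Then for every candidate `c` outside the
sequence approved by some voter of `A`, `λ·ℓ*_r(c) → ℓ_r(c)` as `λ → ∞`, and
`λ·y*_r(i) → y_r(i)` for every voter `i` of `A`. -/
theorem seqPhragmen_continuity
    {C : Type*} [DecidableEq C]
    (A A' : Multiset (Finset C)) (hA : validProfile A) (hA' : validProfile A')
    (L : List C) (hnd : L.Nodup)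
    (hsup : ∀ c ∈ L, (A.filter fun b => c ∈ b) ≠ 0) :
    (∀ c : C, c ∉ L → (A.filter fun b => c ∈ b) ≠ 0 →
      Filter.Tendsto
        (fun lam : ℕ => (lam : ℚ) *
          phragLoadVal (lam • A + A') (phragLoadsAfter (lam • A + A') L) c)
        Filter.atTop
        (nhds (phragLoadVal A (phragLoadsAfter A L) c))) ∧
    (∀ b ∈ A,
      Filter.Tendsto
        (fun lam : ℕ => (lam : ℚ) * phragLoadsAfter (lam • A + A') L b)
        Filter.atTop
        (nhds (phragLoadsAfter A L b))) := by
  have hbase : ∀ b : Finset C,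
      Filter.Tendsto (fun lam : ℕ => (lam : ℚ) * (fun _ : Finset C => (0 : ℚ)) b)
        Filter.atTop (nhds ((fun _ : Finset C => (0 : ℚ)) b)) := by
    intro b; simpa using (tendsto_const_nhds : Filter.Tendsto
      (fun _ : ℕ => (0 : ℚ)) Filter.atTop (nhds 0))
  have hfold := fun b => foldl_tendsto A A' L hsup
    (fun _ => fun _ => (0 : ℚ)) (fun _ => (0 : ℚ)) hbase b
  constructor
  · intro c _ hc
    exact key_loadVal A A' (fun lam => phragLoadsAfter (lam • A + A') L)
      (phragLoadsAfter A L) hfold c hc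
  · intro b _
    exact hfold b
end

section
/- On every profile A in which all ballots have size at most 2 and all candidates have equal approval score at most n/k (i.e., |A_i| ≤ 2 for all i ∈ N_A and |N_A(c)| = |N_A(d)| ≤ n/k for all c,d ∈ C), the method of equal shares and seqPhragmén coincide: MES(A,k) = seqPhragmén(A,k). -/
/-- Total budget of the supporters of candidate `c`, where the budget function `x` is
keyed by ballots (voters with equal ballots always carry equal budgets). -/
def supBudget {C : Type*} [DecidableEq C] (A : Multiset (Finset C))
    (x : Finset C → ℚ) (c : C) : ℚ :=
  ((A.filter fun b => c ∈ b).map x).sum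

/-- Candidate `c` is affordable: its supporters have a total budget of at least 1. -/
def mesAfford {C : Type*} [DecidableEq C] (A : Multiset (Finset C))
    (x : Finset C → ℚ) (c : C) : Prop :=
  1 ≤ supBudget A x c

/-- `ρ` is the per-voter price of candidate `c`: splitting the cost 1 as equally as
possible, `Σ_{i ∈ N_A(c)} min(ρ, x_i) = 1`, with `ρ` minimal such. -/
def mesRho {C : Type*} [DecidableEq C] (A : Multiset (Finset C))
    (x : Finset C → ℚ) (c : C) (ρ : ℚ) : Prop :=
  ((A.filter fun b => c ∈ b).map fun b => min ρ (x b)).sum = 1 ∧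
  ∀ ρ' : ℚ, ((A.filter fun b => c ∈ b).map fun b => min ρ' (x b)).sum = 1 → ρ ≤ ρ'

/-- `mesPhase1 A x E L xf`: starting from budgets `x` and already elected candidates
`E`, the sequence `L` is a valid run of Phase 1 of MES ending with budgets `xf`: each
elected candidate is affordable and minimizes the maximal per-voter payment `ρ` among
the affordable unelected candidates, and budgets are reduced accordingly. -/
def mesPhase1 {C : Type*} [DecidableEq C] (A : Multiset (Finset C)) :
    (Finset C → ℚ) → Finset C → List C → (Finset C → ℚ) → Prop
  | x, _, [], xf => xf = x
  | x, E, c :: rest, xf =>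
      c ∉ E ∧ mesAfford A x c ∧
      ∃ ρ : ℚ, mesRho A x c ρ ∧
        (∀ d : C, d ∉ E → mesAfford A x d → ∀ ρ' : ℚ, mesRho A x d ρ' → ρ ≤ ρ') ∧
        mesPhase1 A (fun b => if c ∈ b then x b - min ρ (x b) else x b)
          (insert c E) rest xf

/-- In the Phragmén completion phase, `buyTime A x c` is the time at which candidate
`c` would be bought when every voter's budget grows uniformly from `x`: the first time
`t ≥ 0` at which the supporters' total budget reaches 1. -/
def buyTime {C : Type*} [DecidableEq C] (A : Multiset (Finset C))
    (x : Finset C → ℚ) (c : C) : ℚ :=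
  max 0 ((1 - supBudget A x c) / ((Multiset.card (A.filter fun b => c ∈ b) : ℚ)))

/-- `mesPhase2 A x E L`: starting from budgets `x` (kept from Phase 1) and already
elected candidates `E`, the sequence `L` is a valid run of the seqPhragmén completion
(Phase 2) of MES: budgets grow uniformly over time, each elected candidate is bought
as soon as its supporters' total budget reaches 1 (i.e. it minimizes the buying time),
whereupon its supporters' budgets are reset to 0. -/
def mesPhase2 {C : Type*} [DecidableEq C] (A : Multiset (Finset C)) :
    (Finset C → ℚ) → Finset C → List C → Prop
  | _, _, [] => True
  | x, E, c :: rest =>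
      c ∉ E ∧ (A.filter fun b => c ∈ b) ≠ 0 ∧
      (∀ d : C, d ∉ E → (A.filter fun b => d ∈ b) ≠ 0 →
        buyTime A x c ≤ buyTime A x d) ∧
      mesPhase2 A (fun b => if c ∈ b then 0 else x b + buyTime A x c) (insert c E) rest

/-- The method of equal shares (with the seqPhragmén completion): every voter starts
with budget `k/n`; Phase 1 runs until either `k` candidates are elected or no further
candidate is affordable, in which case Phase 2 completes the committee. -/
def mes {C : Type*} [DecidableEq C] (A : Multiset (Finset C)) (k : ℕ) :
    Set (Finset C) :=
  {W | ∃ (L1 : List C) (xf : Finset C → ℚ),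
      mesPhase1 A (fun _ => (k : ℚ) / (Multiset.card A : ℚ)) ∅ L1 xf ∧
      ((L1.length = k ∧ W = L1.toFinset) ∨
        (L1.length < k ∧
          (∀ c : C, c ∉ L1.toFinset → ¬ mesAfford A xf c) ∧
          ∃ L2 : List C, mesPhase2 A xf L1.toFinset L2 ∧
            (L1 ++ L2).length = k ∧ W = (L1 ++ L2).toFinset))}

section AuxHelpers

variable {C : Type*} [DecidableEq C]

lemma aux_sum_map_const {α : Type*} (M : Multiset α) (r : ℚ) :
    (M.map fun _ => r).sum = (Multiset.card M : ℚ) * r := by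
  rw [Multiset.map_const', Multiset.sum_replicate, nsmul_eq_mul]

lemma aux_sum_map_add_const {α : Type*} (M : Multiset α) (f : α → ℚ) (t : ℚ) :
    (M.map fun a => f a + t).sum = (M.map f).sum + (Multiset.card M : ℚ) * t := by
  induction M using Multiset.induction with
  | empty => simp
  | cons a M ih => simp only [Multiset.map_cons, Multiset.sum_cons, ih,
      Multiset.card_cons]; push_cast; ring

lemma aux_sum_map_nonneg {α : Type*} (M : Multiset α) (f : α → ℚ)
    (h : ∀ a ∈ M, 0 ≤ f a) : 0 ≤ (M.map f).sum :=
  Multiset.sum_nonneg (by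
    intro x hx; obtain ⟨a, ha, rfl⟩ := Multiset.mem_map.mp hx; exact h a ha)

lemma aux_sum_map_eq_zero {α : Type*} (M : Multiset α) (f : α → ℚ)
    (h0 : ∀ a ∈ M, 0 ≤ f a) (hs : (M.map f).sum = 0) : ∀ a ∈ M, f a = 0 := by
  induction M using Multiset.induction with
  | empty => simp
  | cons a M ih =>
    simp only [Multiset.map_cons, Multiset.sum_cons] at hs
    have hfa : 0 ≤ f a := h0 a (Multiset.mem_cons_self a M)
    have hM : 0 ≤ (M.map f).sum :=
      aux_sum_map_nonneg M f (fun a' ha' => h0 a' (Multiset.mem_cons_of_mem ha'))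
    intro b hb
    rcases Multiset.mem_cons.mp hb with rfl | hb
    · linarith
    · exact ih (fun a' ha' => h0 a' (Multiset.mem_cons_of_mem ha')) (by linarith) b hb

lemma aux_eq_of_sum_map_le {α : Type*} (M : Multiset α) (f g : α → ℚ)
    (hle : ∀ a ∈ M, f a ≤ g a) (hs : (M.map f).sum = (M.map g).sum) :
    ∀ a ∈ M, f a = g a := by
  have h := aux_sum_map_eq_zero M (fun a => g a - f a)
    (fun a ha => by linarith [hle a ha]) (by rw [Multiset.sum_map_sub]; linarith)
  intro a ha; have := h a ha; linarith

lemma aux_supBudget_eq_of_rel (A : Multiset (Finset C)) (x y : Finset C → ℚ) (T : ℚ)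
    (hrel : ∀ b ∈ A, x b = T - y b) (d : C) :
    supBudget A x d = (Multiset.card (A.filter fun b => d ∈ b) : ℚ) * T
      - ((A.filter fun b => d ∈ b).map y).sum := by
  unfold supBudget
  rw [Multiset.map_congr rfl
    (fun b hb => hrel b (Multiset.mem_of_mem_filter hb) :
      ∀ b ∈ A.filter fun b => d ∈ b, x b = (fun b => T - y b) b)]
  rw [Multiset.sum_map_sub, aux_sum_map_const]

lemma aux_card_pos (A : Multiset (Finset C)) (d : C)
    (hd : (A.filter fun b => d ∈ b) ≠ 0) :
    (0 : ℚ) < (Multiset.card (A.filter fun b => d ∈ b) : ℚ) := by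
  have := Multiset.card_pos.mpr hd
  exact_mod_cast this

lemma aux_buyTime_eq (A : Multiset (Finset C)) (x y : Finset C → ℚ) (T : ℚ)
    (hrel : ∀ b ∈ A, x b = T - y b) (d : C)
    (hd : (A.filter fun b => d ∈ b) ≠ 0) (hbd : supBudget A x d ≤ 1) :
    buyTime A x d = phragLoadVal A y d - T := by
  have hcard := aux_card_pos A d hd
  have h1 : (1 - supBudget A x d) / (Multiset.card (A.filter fun b => d ∈ b) : ℚ)
      = phragLoadVal A y d - T := by
    rw [aux_supBudget_eq_of_rel A x y T hrel d]
    unfold phragLoadVal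
    field_simp
    ring
  unfold buyTime
  rw [max_eq_right (div_nonneg (by linarith) hcard.le), h1]

lemma aux_buyTime_nonneg (A : Multiset (Finset C)) (x : Finset C → ℚ) (c : C) :
    0 ≤ buyTime A x c := le_max_left 0 _

/-- Budget bound is preserved by a phase-2 step. -/
lemma aux_step_bound (A : Multiset (Finset C)) (x : Finset C → ℚ) (c : C) (E : Finset C)
    (hsupp : ∀ d : C, (A.filter fun b => d ∈ b) ≠ 0)
    (hx0 : ∀ b ∈ A, 0 ≤ x b)
    (hbd : ∀ d, d ∉ E → supBudget A x d ≤ 1)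
    (hmin : ∀ d, d ∉ E → buyTime A x c ≤ buyTime A x d) :
    ∀ d, d ∉ insert c E →
      supBudget A (fun b => if c ∈ b then 0 else x b + buyTime A x c) d ≤ 1 := by
  intro d hd
  have hdE : d ∉ E := fun h => hd (Finset.mem_insert_of_mem h)
  have ht0 := aux_buyTime_nonneg A x c
  have hcard := aux_card_pos A d (hsupp d)
  have h1 : supBudget A (fun b => if c ∈ b then 0 else x b + buyTime A x c) d
      ≤ supBudget A (fun b => x b + buyTime A x c) d := by
    unfold supBudget
    apply Multiset.sum_map_le_sum_map
    intro b hb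
    have hbA : b ∈ A := Multiset.mem_of_mem_filter hb
    by_cases hcb : c ∈ b
    · simp only [if_pos hcb]; exact add_nonneg (hx0 b hbA) ht0
    · simp only [if_neg hcb]
      linarith
  have h2 : supBudget A (fun b => x b + buyTime A x c) d
      = supBudget A x d
        + (Multiset.card (A.filter fun b => d ∈ b) : ℚ) * buyTime A x c := by
    unfold supBudget
    rw [aux_sum_map_add_const]
  have h3 : buyTime A x c ≤ (1 - supBudget A x d)
      / (Multiset.card (A.filter fun b => d ∈ b) : ℚ) := by
    refine le_trans (hmin d hdE) ?_
    unfold buyTime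
    exact max_le (div_nonneg (by linarith [hbd d hdE]) hcard.le) le_rfl
  have h4 : (Multiset.card (A.filter fun b => d ∈ b) : ℚ) * buyTime A x c
      ≤ 1 - supBudget A x d := by
    rw [mul_comm]
    exact (le_div_iff₀ hcard).mp h3
  linarith [h1, h2]

/-- Lemma A: under the affine state correspondence, phase 2 of MES is exactly
the seqPhragmén process. -/
lemma aux_phase2_iff_phrag (A : Multiset (Finset C))
    (hsupp : ∀ d : C, (A.filter fun b => d ∈ b) ≠ 0) (L : List C) :
    ∀ (x y : Finset C → ℚ) (T : ℚ) (E : Finset C),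
    (∀ b ∈ A, x b = T - y b) → (∀ b ∈ A, 0 ≤ x b) →
    (∀ d, d ∉ E → supBudget A x d ≤ 1) →
    (mesPhase2 A x E L ↔ phragValid A y E L) := by
  induction L with
  | nil => intro x y T E _ _ _; simp [mesPhase2, phragValid]
  | cons c rest ih =>
    intro x y T E hrel hx0 hbd
    have hbt : ∀ d, d ∉ E → buyTime A x d = phragLoadVal A y d - T :=
      fun d hd => aux_buyTime_eq A x y T hrel d (hsupp d) (hbd d hd)
    simp only [mesPhase2, phragValid]
    constructor
    · rintro ⟨hcE, hcne, hmin, hrec⟩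
      have hmin' : ∀ d, d ∉ E → buyTime A x c ≤ buyTime A x d :=
        fun d hd => hmin d hd (hsupp d)
      refine ⟨hcE, hcne, ?_, ?_⟩
      · intro d hd _
        have := hmin' d hd
        rw [hbt c hcE, hbt d hd] at this
        linarith
      · have hrel' : ∀ b ∈ A, (if c ∈ b then (0:ℚ) else x b + buyTime A x c)
            = phragLoadVal A y c - (if c ∈ b then phragLoadVal A y c else y b) := by
          intro b hb
          by_cases hcb : c ∈ b
          · simp [hcb]
          · simp only [if_neg hcb]
            rw [hbt c hcE] at *
            have := hrel b hb
            linarith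
        have hx0' : ∀ b ∈ A, 0 ≤ (if c ∈ b then (0:ℚ) else x b + buyTime A x c) := by
          intro b hb
          by_cases hcb : c ∈ b
          · simp [hcb]
          · simp only [if_neg hcb]
            exact add_nonneg (hx0 b hb) (aux_buyTime_nonneg A x c)
        have hbd' := aux_step_bound A x c E hsupp hx0 hbd hmin'
        exact (ih _ _ (phragLoadVal A y c) (insert c E) hrel' hx0' hbd').mp hrec
    · rintro ⟨hcE, hcne, hmin, hrec⟩
      have hmin' : ∀ d, d ∉ E → buyTime A x c ≤ buyTime A x d := by
        intro d hd
        rw [hbt c hcE, hbt d hd]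
        have := hmin d hd (hsupp d)
        linarith
      refine ⟨hcE, hcne, fun d hd _ => hmin' d hd, ?_⟩
      have hrel' : ∀ b ∈ A, (if c ∈ b then (0:ℚ) else x b + buyTime A x c)
          = phragLoadVal A y c - (if c ∈ b then phragLoadVal A y c else y b) := by
        intro b hb
        by_cases hcb : c ∈ b
        · simp [hcb]
        · simp only [if_neg hcb]
          rw [hbt c hcE] at *
          have := hrel b hb
          linarith
      have hx0' : ∀ b ∈ A, 0 ≤ (if c ∈ b then (0:ℚ) else x b + buyTime A x c) := by
        intro b hb
        by_cases hcb : c ∈ b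
        · simp [hcb]
        · simp only [if_neg hcb]
          exact add_nonneg (hx0 b hb) (aux_buyTime_nonneg A x c)
      have hbd' := aux_step_bound A x c E hsupp hx0 hbd hmin'
      exact (ih _ _ (phragLoadVal A y c) (insert c E) hrel' hx0' hbd').mpr hrec

end AuxHelpers

section AuxPhase1

variable {C : Type*} [DecidableEq C]

lemma aux_supBudget_const (A : Multiset (Finset C)) (q : ℚ) (d : C) :
    supBudget A (fun _ => q) d = (Multiset.card (A.filter fun b => d ∈ b) : ℚ) * q := by
  unfold supBudget; exact aux_sum_map_const _ q

lemma aux_phragLoadVal_congr (A : Multiset (Finset C)) (y1 y2 : Finset C → ℚ)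
    (h : ∀ b ∈ A, y1 b = y2 b) (d : C) :
    phragLoadVal A y1 d = phragLoadVal A y2 d := by
  unfold phragLoadVal
  rw [Multiset.map_congr rfl fun b hb => h b (Multiset.mem_of_mem_filter hb)]

lemma aux_phragValid_congr (A : Multiset (Finset C)) (L : List C) :
    ∀ (y1 y2 : Finset C → ℚ) (E : Finset C),
    (∀ b ∈ A, y1 b = y2 b) → (phragValid A y1 E L ↔ phragValid A y2 E L) := by
  induction L with
  | nil => intros; simp [phragValid]
  | cons c rest ih =>
    intro y1 y2 E h
    have hl : ∀ d, phragLoadVal A y1 d = phragLoadVal A y2 d :=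
      aux_phragLoadVal_congr A y1 y2 h
    have hupd : ∀ b ∈ A, (if c ∈ b then phragLoadVal A y1 c else y1 b)
        = (if c ∈ b then phragLoadVal A y2 c else y2 b) := by
      intro b hb; by_cases hcb : c ∈ b <;> simp [hcb, hl c, h b hb]
    simp only [phragValid]
    constructor <;> rintro ⟨h1, h2, h3, h4⟩
    · exact ⟨h1, h2, fun d hd hne => by rw [← hl c, ← hl d]; exact h3 d hd hne,
        (ih _ _ _ hupd).mp h4⟩
    · exact ⟨h1, h2, fun d hd hne => by rw [hl c, hl d]; exact h3 d hd hne,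
        (ih _ _ _ hupd).mpr h4⟩

variable (A : Multiset (Finset C)) (q : ℚ)

/-- Load values are at least `q` when all loads are nonnegative. -/
lemma aux_load_ge (hq1 : ∀ d : C, (Multiset.card (A.filter fun b => d ∈ b) : ℚ) * q = 1)
    (hsupp : ∀ d : C, (A.filter fun b => d ∈ b) ≠ 0)
    (y : Finset C → ℚ) (hy0 : ∀ b ∈ A, 0 ≤ y b) (d : C) :
    q ≤ phragLoadVal A y d := by
  have hcard := aux_card_pos A d (hsupp d)
  have hy : 0 ≤ ((A.filter fun b => d ∈ b).map y).sum :=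
    aux_sum_map_nonneg _ y (fun b hb => hy0 b (Multiset.mem_of_mem_filter hb))
  unfold phragLoadVal
  rw [le_div_iff₀ hcard, mul_comm, hq1 d]
  linarith

/-- If all supporters of `c` have full budget `q`, then its support budget is 1,
its load value is `q`, and `q` is a valid price. -/
lemma aux_fresh_facts (hq1 : ∀ d : C, (Multiset.card (A.filter fun b => d ∈ b) : ℚ) * q = 1)
    (hsupp : ∀ d : C, (A.filter fun b => d ∈ b) ≠ 0)
    (x y : Finset C → ℚ) (hrel : ∀ b ∈ A, x b = q - y b)
    (c : C) (hfull : ∀ b ∈ A, c ∈ b → x b = q) :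
    supBudget A x c = 1 ∧ phragLoadVal A y c = q ∧
      ((A.filter fun b => c ∈ b).map fun b => min q (x b)).sum = 1 := by
  have hcard := aux_card_pos A c (hsupp c)
  have hfull' : ∀ b ∈ (A.filter fun b => c ∈ b), x b = q := by
    intro b hb
    exact hfull b (Multiset.mem_filter.mp hb).1 (Multiset.mem_filter.mp hb).2
  have hsup : supBudget A x c = 1 := by
    unfold supBudget
    rw [Multiset.map_congr rfl (fun b hb => hfull' b hb :
      ∀ b ∈ A.filter fun b => c ∈ b, x b = (fun _ => q) b), aux_sum_map_const, hq1 c]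
  have hY : ((A.filter fun b => c ∈ b).map y).sum = 0 := by
    have := aux_supBudget_eq_of_rel A x y q hrel c
    rw [hsup, hq1 c] at this
    linarith
  refine ⟨hsup, ?_, ?_⟩
  · unfold phragLoadVal
    rw [hY, add_zero, div_eq_iff hcard.ne', mul_comm, hq1 c]
  · rw [Multiset.map_congr rfl (fun b hb => by rw [hfull' b hb, min_self] :
      ∀ b ∈ A.filter fun b => c ∈ b, min q (x b) = (fun _ => q) b),
      aux_sum_map_const, hq1 c]

/-- Any valid price for any candidate is at least `q`. -/
lemma aux_price_ge (hq1 : ∀ d : C, (Multiset.card (A.filter fun b => d ∈ b) : ℚ) * q = 1)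
    (hsupp : ∀ d : C, (A.filter fun b => d ∈ b) ≠ 0)
    (x : Finset C → ℚ) (d : C) (ρ' : ℚ)
    (h : ((A.filter fun b => d ∈ b).map fun b => min ρ' (x b)).sum = 1) :
    q ≤ ρ' := by
  by_contra hlt
  push_neg at hlt
  have hcard := aux_card_pos A d (hsupp d)
  have h1 : ((A.filter fun b => d ∈ b).map fun b => min ρ' (x b)).sum
      ≤ ((A.filter fun b => d ∈ b).map fun _ => ρ').sum :=
    Multiset.sum_map_le_sum_map _ _ (fun b _ => min_le_left _ _)
  rw [aux_sum_map_const] at h1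
  have h2 : (Multiset.card (A.filter fun b => d ∈ b) : ℚ) * ρ'
      < (Multiset.card (A.filter fun b => d ∈ b) : ℚ) * q :=
    mul_lt_mul_of_pos_left hlt hcard
  rw [hq1 d] at h2
  linarith

/-- An affordable candidate has all its supporters at full budget `q`. -/
lemma aux_afford_full (hq0 : 0 ≤ q)
    (hq1 : ∀ d : C, (Multiset.card (A.filter fun b => d ∈ b) : ℚ) * q = 1)
    (x : Finset C → ℚ) (htv : ∀ b ∈ A, x b = 0 ∨ x b = q)
    (c : C) (haff : mesAfford A x c) :
    ∀ b ∈ A, c ∈ b → x b = q := by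
  have hle : ∀ b ∈ (A.filter fun b => c ∈ b), x b ≤ (fun _ => q) b := by
    intro b hb
    rcases htv b (Multiset.mem_of_mem_filter hb) with h | h <;> simp [h, hq0]
  have hs1 : ((A.filter fun b => c ∈ b).map x).sum
      ≤ ((A.filter fun b => c ∈ b).map fun _ => q).sum :=
    Multiset.sum_map_le_sum_map _ _ hle
  rw [aux_sum_map_const, hq1 c] at hs1
  have haff' : 1 ≤ ((A.filter fun b => c ∈ b).map x).sum := haff
  have heq := aux_eq_of_sum_map_le _ x (fun _ => q) hle (by
    rw [aux_sum_map_const, hq1 c]; linarith)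
  intro b hbA hcb
  exact heq b (Multiset.mem_filter.mpr ⟨hbA, hcb⟩)

/-- Lemma B: a Phase-1 run of MES is a valid Phragmén prefix. -/
lemma aux_phase1_to_phrag
    (hq0 : 0 ≤ q)
    (hq1 : ∀ d : C, (Multiset.card (A.filter fun b => d ∈ b) : ℚ) * q = 1)
    (hsupp : ∀ d : C, (A.filter fun b => d ∈ b) ≠ 0)
    (L1 : List C) :
    ∀ (x y : Finset C → ℚ) (E : Finset C) (xf : Finset C → ℚ),
    (∀ b ∈ A, x b = q - y b) → (∀ b ∈ A, x b = 0 ∨ x b = q) →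
    mesPhase1 A x E L1 xf →
    (∀ b ∈ A, xf b = 0 ∨ xf b = q) ∧
    ∀ (L2 : List C) (yf : Finset C → ℚ), (∀ b ∈ A, xf b = q - yf b) →
      phragValid A yf (E ∪ L1.toFinset) L2 → phragValid A y E (L1 ++ L2) := by
  induction L1 with
  | nil =>
    intro x y E xf hrel htv h1
    have hxf : xf = x := h1
    subst hxf
    refine ⟨htv, ?_⟩
    intro L2 yf hrelf hvalid
    rw [List.toFinset_nil, Finset.union_empty] at hvalid
    rw [List.nil_append]
    refine (aux_phragValid_congr A L2 yf y E ?_).mp hvalid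
    intro b hb
    have h1 := hrel b hb
    have h2 := hrelf b hb
    linarith
  | cons c rest ih =>
    intro x y E xf hrel htv h1
    obtain ⟨hcE, haff, ρ, hrho, hminrho, hrec⟩ := h1
    have hfull := aux_afford_full A q hq0 hq1 x htv c haff
    obtain ⟨hsup1, hload, hrhoq⟩ := aux_fresh_facts A q hq1 hsupp x y hrel c hfull
    -- the payment of each supporter is its full budget
    have hpay : ∀ b ∈ (A.filter fun b => c ∈ b), min ρ (x b) = x b := by
      have hle : ∀ b ∈ (A.filter fun b => c ∈ b), min ρ (x b) ≤ x b :=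
        fun b _ => min_le_right _ _
      exact aux_eq_of_sum_map_le _ _ x hle (by rw [hrho.1]; exact hsup1.symm)
    have hy0 : ∀ b ∈ A, 0 ≤ y b := by
      intro b hb
      have := hrel b hb
      rcases htv b hb with h | h <;> rw [h] at this <;> linarith
    -- new states
    have hrel' : ∀ b ∈ A, (if c ∈ b then x b - min ρ (x b) else x b)
        = q - (if c ∈ b then phragLoadVal A y c else y b) := by
      intro b hb
      by_cases hcb : c ∈ b
      · rw [if_pos hcb, if_pos hcb, hpay b (Multiset.mem_filter.mpr ⟨hb, hcb⟩), hload]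
        ring
      · rw [if_neg hcb, if_neg hcb]; exact hrel b hb
    have htv' : ∀ b ∈ A, (if c ∈ b then x b - min ρ (x b) else x b) = 0 ∨
        (if c ∈ b then x b - min ρ (x b) else x b) = q := by
      intro b hb
      by_cases hcb : c ∈ b
      · left; rw [if_pos hcb, hpay b (Multiset.mem_filter.mpr ⟨hb, hcb⟩)]; ring
      · rw [if_neg hcb]; exact htv b hb
    obtain ⟨htvf, hcont⟩ := ih _ _ (insert c E) xf hrel' htv' hrec
    refine ⟨htvf, ?_⟩
    intro L2 yf hrelf hvalid
    rw [List.cons_append]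
    refine ⟨hcE, hsupp c, ?_, ?_⟩
    · intro d _ _
      rw [hload]
      exact aux_load_ge A q hq1 hsupp y hy0 d
    · refine hcont L2 yf hrelf ?_
      have hEeq : E ∪ (c :: rest).toFinset = insert c E ∪ rest.toFinset := by
        rw [List.toFinset_cons, Finset.union_insert, Finset.insert_union]
      rw [← hEeq]
      exact hvalid

/-- Lemma C: a Phragmén run splits into a Phase-1 run followed by a Phase-2 run. -/
lemma aux_phrag_to_mes
    (hq0 : 0 ≤ q)
    (hq1 : ∀ d : C, (Multiset.card (A.filter fun b => d ∈ b) : ℚ) * q = 1)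
    (hsupp : ∀ d : C, (A.filter fun b => d ∈ b) ≠ 0)
    (L : List C) :
    ∀ (x y : Finset C → ℚ) (E : Finset C),
    (∀ b ∈ A, x b = q - y b) → (∀ b ∈ A, x b = 0 ∨ x b = q) →
    phragValid A y E L →
    ∃ (L1 L2 : List C) (xf : Finset C → ℚ), L = L1 ++ L2 ∧ mesPhase1 A x E L1 xf ∧
      (L2 = [] ∨ ((∀ c, c ∉ E ∪ L1.toFinset → ¬ mesAfford A xf c) ∧
        mesPhase2 A xf (E ∪ L1.toFinset) L2)) := by
  induction L with
  | nil =>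
    intro x y E _ _ _
    exact ⟨[], [], x, rfl, rfl, Or.inl rfl⟩
  | cons c rest ih =>
    intro x y E hrel htv hph
    obtain ⟨hcE, hcne, hmin, hrec⟩ := hph
    have hy0 : ∀ b ∈ A, 0 ≤ y b := by
      intro b hb
      have := hrel b hb
      rcases htv b hb with h | h <;> rw [h] at this <;> linarith
    have hYge : 0 ≤ ((A.filter fun b => c ∈ b).map y).sum :=
      aux_sum_map_nonneg _ y (fun b hb => hy0 b (Multiset.mem_of_mem_filter hb))
    by_cases hYc : ((A.filter fun b => c ∈ b).map y).sum = 0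
    · -- fresh case: c is elected by Phase 1
      have hfull : ∀ b ∈ A, c ∈ b → x b = q := by
        intro b hbA hcb
        have hy := aux_sum_map_eq_zero _ y
          (fun b hb => hy0 b (Multiset.mem_of_mem_filter hb)) hYc b
          (Multiset.mem_filter.mpr ⟨hbA, hcb⟩)
        have := hrel b hbA
        rw [hy] at this
        linarith
      obtain ⟨hsup1, hload, hrhoq⟩ := aux_fresh_facts A q hq1 hsupp x y hrel c hfull
      have haff : mesAfford A x c := le_of_eq hsup1.symm
      have hrho : mesRho A x c q :=
        ⟨hrhoq, fun ρ' h => aux_price_ge A q hq1 hsupp x c ρ' h⟩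
      have hminrho : ∀ d : C, d ∉ E → mesAfford A x d → ∀ ρ' : ℚ, mesRho A x d ρ' → q ≤ ρ' :=
        fun d _ _ ρ' hρ' => aux_price_ge A q hq1 hsupp x d ρ' hρ'.1
      have hpay : ∀ b ∈ A, c ∈ b → x b - min q (x b) = 0 := by
        intro b hbA hcb
        rw [hfull b hbA hcb, min_self]; ring
      have hrel' : ∀ b ∈ A, (if c ∈ b then x b - min q (x b) else x b)
          = q - (if c ∈ b then phragLoadVal A y c else y b) := by
        intro b hb
        by_cases hcb : c ∈ b
        · rw [if_pos hcb, if_pos hcb, hpay b hb hcb, hload]; ring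
        · rw [if_neg hcb, if_neg hcb]; exact hrel b hb
      have htv' : ∀ b ∈ A, (if c ∈ b then x b - min q (x b) else x b) = 0 ∨
          (if c ∈ b then x b - min q (x b) else x b) = q := by
        intro b hb
        by_cases hcb : c ∈ b
        · left; rw [if_pos hcb]; exact hpay b hb hcb
        · rw [if_neg hcb]; exact htv b hb
      obtain ⟨L1', L2', xf, hsplit, hmp1, hdisj⟩ := ih _ _ (insert c E) hrel' htv' hrec
      refine ⟨c :: L1', L2', xf, by rw [hsplit, List.cons_append],
        ⟨hcE, haff, q, hrho, hminrho, hmp1⟩, ?_⟩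
      have hEeq : E ∪ (c :: L1').toFinset = insert c E ∪ L1'.toFinset := by
        rw [List.toFinset_cons, Finset.union_insert, Finset.insert_union]
      rw [hEeq]
      exact hdisj
    · -- non-fresh case: Phase 1 is over, everything is Phase 2
      have hYpos : 0 < ((A.filter fun b => c ∈ b).map y).sum := lt_of_le_of_ne hYge (Ne.symm hYc)
      have hallpos : ∀ d, d ∉ E → 0 < ((A.filter fun b => d ∈ b).map y).sum := by
        intro d hdE
        by_contra hle
        push_neg at hle
        have hYd : ((A.filter fun b => d ∈ b).map y).sum = 0 :=
          le_antisymm hle (aux_sum_map_nonneg _ y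
            (fun b hb => hy0 b (Multiset.mem_of_mem_filter hb)))
        have hcardc := aux_card_pos A c (hsupp c)
        have hcardd := aux_card_pos A d (hsupp d)
        have hld : phragLoadVal A y d = q := by
          unfold phragLoadVal
          rw [hYd, add_zero, div_eq_iff hcardd.ne', mul_comm, hq1 d]
        have hlc : q < phragLoadVal A y c := by
          unfold phragLoadVal
          rw [lt_div_iff₀ hcardc, mul_comm, hq1 c]
          linarith
        have := hmin d hdE (hsupp d)
        rw [hld] at this
        linarith
      have hnoaff : ∀ d, d ∉ E → ¬ mesAfford A x d := by
        intro d hdE haffd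
        have hsup := aux_supBudget_eq_of_rel A x y q hrel d
        rw [hq1 d] at hsup
        have := hallpos d hdE
        have : supBudget A x d < 1 := by rw [hsup]; linarith
        exact absurd haffd (by unfold mesAfford; linarith)
      have hbd : ∀ d, d ∉ E → supBudget A x d ≤ 1 := by
        intro d hdE
        have hsup := aux_supBudget_eq_of_rel A x y q hrel d
        rw [hq1 d] at hsup
        have := hallpos d hdE
        linarith
      have hx0 : ∀ b ∈ A, 0 ≤ x b := by
        intro b hb
        rcases htv b hb with h | h
        · rw [h]
        · rw [h]; exact hq0
      have hph2 : mesPhase2 A x E (c :: rest) :=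
        (aux_phase2_iff_phrag A hsupp (c :: rest) x y q E hrel hx0 hbd).mpr
          ⟨hcE, hcne, hmin, hrec⟩
      refine ⟨[], c :: rest, x, rfl, rfl, Or.inr ?_⟩
      rw [List.toFinset_nil, Finset.union_empty]
      exact ⟨hnoaff, hph2⟩

end AuxPhase1

/-- On every profile in which all ballots have size at most 2 and all candidates have
equal approval score at most `n/k`, the method of equal shares and seqPhragmén
coincide. -/
theorem mes_eq_seqPhragmen
    {C : Type*} [DecidableEq C] [Fintype C] (hm : 1 < Fintype.card C)
    (A : Multiset (Finset C)) (hA : validProfile A)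
    (hsize : ∀ b ∈ A, b.card ≤ 2)
    (k : ℕ) (hk1 : 1 ≤ k) (hk2 : k < Fintype.card C)
    (heq : ∀ c d : C, appScore A c = appScore A d)
    (hnk : ∀ c : C, appScore A c * k ≤ Multiset.card A) :
    mes A k = seqPhragmen A k := by
  obtain ⟨hA0, hbne⟩ := hA
  have hnpos : 0 < Multiset.card A := Multiset.card_pos.mpr hA0
  have hnQ : (0:ℚ) < (Multiset.card A : ℚ) := by exact_mod_cast hnpos
  have hscorepos : ∀ c : C, 0 < appScore A c := by
    obtain ⟨b, hbA⟩ := Multiset.exists_mem_of_ne_zero hA0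
    obtain ⟨c0, hc0⟩ := Finset.nonempty_iff_ne_empty.mpr (hbne b hbA)
    intro c
    rw [heq c c0]
    unfold appScore
    rw [Multiset.card_pos]
    intro hf
    have hmem : b ∈ A.filter fun b => c0 ∈ b := Multiset.mem_filter.mpr ⟨hbA, hc0⟩
    rw [hf] at hmem
    exact Multiset.notMem_zero b hmem
  have hsupp : ∀ d : C, (A.filter fun b => d ∈ b) ≠ 0 := by
    intro d
    have h := hscorepos d
    unfold appScore at h
    rw [Multiset.card_pos] at h
    exact h
  set q : ℚ := (k:ℚ) / (Multiset.card A : ℚ) with hqdef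
  have hq0 : 0 ≤ q := div_nonneg (by positivity) hnQ.le
  obtain ⟨c1⟩ : Nonempty C := Fintype.card_pos_iff.mp (by omega)
  have hsq : ∀ d : C, (Multiset.card (A.filter fun b => d ∈ b) : ℚ) * q
      = ((appScore A c1 * k : ℕ) : ℚ) / (Multiset.card A : ℚ) := by
    intro d
    have hd : Multiset.card (A.filter fun b => d ∈ b) = appScore A c1 := heq d c1
    rw [hd, hqdef]
    push_cast
    ring
  rcases lt_or_eq_of_le (hnk c1) with hlt | hEq
  · -- case s·k < n : Phase 1 is empty
    have hsublt : ∀ d : C, supBudget A (fun _ => q) d < 1 := by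
      intro d
      rw [aux_supBudget_const, hsq d, div_lt_one hnQ]
      exact_mod_cast hlt
    ext W
    simp only [mes, seqPhragmen, Set.mem_setOf_eq]
    constructor
    · rintro ⟨L1, xf, h1, hcase⟩
      cases L1 with
      | cons c rest =>
        exact absurd h1.2.1 (not_le.mpr (hsublt c))
      | nil =>
        have hxf : xf = fun _ => q := h1
        subst hxf
        rcases hcase with ⟨hlen, _⟩ | ⟨_, _, L2, h2, hlen2, hW⟩
        · simp at hlen; omega
        · refine ⟨L2, ?_, by simpa using hlen2, ?_⟩
          · simp only [List.nil_append] at hW; exact hW.symm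
          · exact (aux_phase2_iff_phrag A hsupp L2 (fun _ => q) (fun _ => 0) q ∅
              (fun b _ => by ring) (fun b _ => hq0) (fun d _ => (hsublt d).le)).mp
              (by simpa using h2)
    · rintro ⟨L, hWL, hlen, hph⟩
      refine ⟨[], fun _ => q, rfl, Or.inr ⟨by simp; omega, ?_, L, ?_, ?_, ?_⟩⟩
      · exact fun c _ => not_le.mpr (hsublt c)
      · have h2 := (aux_phase2_iff_phrag A hsupp L (fun _ => q) (fun _ => 0) q ∅
          (fun b _ => by ring) (fun b _ => hq0) (fun d _ => (hsublt d).le)).mpr hph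
        simpa using h2
      · simpa using hlen
      · simp only [List.nil_append]; exact hWL.symm
  · -- case s·k = n
    have hq1 : ∀ d : C, (Multiset.card (A.filter fun b => d ∈ b) : ℚ) * q = 1 := by
      intro d
      rw [hsq d, hEq, div_self hnQ.ne']
    ext W
    simp only [mes, seqPhragmen, Set.mem_setOf_eq]
    constructor
    · rintro ⟨L1, xf, h1, hcase⟩
      obtain ⟨htvf, hcont⟩ := aux_phase1_to_phrag A q hq0 hq1 hsupp L1
        (fun _ => q) (fun _ => 0) ∅ xf (fun b _ => by ring) (fun b _ => Or.inr rfl) h1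
      rcases hcase with ⟨hlen, hW⟩ | ⟨hlen, hnoaff, L2, h2, hlen2, hW⟩
      · have hfin := hcont [] (fun b => q - xf b) (fun b _ => by ring) trivial
        rw [List.append_nil] at hfin
        exact ⟨L1, hW.symm, hlen, hfin⟩
      · have hrelf : ∀ b ∈ A, xf b = q - (q - xf b) := fun b _ => by ring
        have hxf0 : ∀ b ∈ A, 0 ≤ xf b := by
          intro b hb
          rcases htvf b hb with h | h
          · rw [h]
          · rw [h]; exact hq0
        have hbdf : ∀ d, d ∉ L1.toFinset → supBudget A xf d ≤ 1 := by
          intro d hd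
          exact (not_le.mp (hnoaff d hd)).le
        have hph2 := (aux_phase2_iff_phrag A hsupp L2 xf (fun b => q - xf b) q
          L1.toFinset hrelf hxf0 hbdf).mp h2
        have hfin := hcont L2 (fun b => q - xf b) hrelf (by simpa using hph2)
        exact ⟨L1 ++ L2, hW.symm, hlen2, hfin⟩
    · rintro ⟨L, hWL, hlen, hph⟩
      obtain ⟨L1, L2, xf, hsplit, hmp1, hdisj⟩ := aux_phrag_to_mes A q hq0 hq1 hsupp L
        (fun _ => q) (fun _ => 0) ∅ (fun b _ => by ring) (fun b _ => Or.inr rfl) hph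
      refine ⟨L1, xf, hmp1, ?_⟩
      cases L2 with
      | nil =>
        rw [List.append_nil] at hsplit
        subst hsplit
        exact Or.inl ⟨hlen, hWL.symm⟩
      | cons c2 r2 =>
        rcases hdisj with h | ⟨hnoaff, hph2⟩
        · exact absurd h (by simp)
        · right
          subst hsplit
          have hlen' : L1.length + (c2 :: r2).length = k := by simpa using hlen
          refine ⟨?_, fun c hc => hnoaff c (by simpa using hc), c2 :: r2,
            by simpa using hph2, hlen, hWL.symm⟩
          simp only [List.length_cons] at hlen'
          omega
end

section
/- Sequential Thiele rules with strictly increasing scoring function only pick support-maximal candidates: let s be a Thiele scoring function with s(x) < s(x+1) for all x ≥ 0, let A be a laminar profile, let W ⊆ C be any set of candidates, and let c,d ∈ C∖W with ∅ ≠ N_A(d) ⊊ N_A(c). Then ŝ(A, W ∪ {c}) > ŝ(A, W ∪ {d}); in particular, given any valid sequence (c_1,…,c_ℓ) of the sequential Thiele rule with both c and d unchosen, d does not maximize ŝ(A,{c_1,…,c_ℓ,·}) and is not selected next. -/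
lemma thiele_key {C : Type*} [DecidableEq C]
    (s : ℕ → ℚ) (hstrict : ∀ x : ℕ, s x < s (x + 1))
    (A : Multiset (Finset C))
    (W : Finset C) (c d : C) (hcW : c ∉ W) (hdW : d ∉ W)
    (hsub : ∀ b ∈ A, d ∈ b → c ∈ b)
    (hproper : ∃ b ∈ A, c ∈ b ∧ d ∉ b) :
    thieleScore s A (insert d W) < thieleScore s A (insert c W) := by
  have hcard : ∀ (b : Finset C) (x : C), x ∉ W →
      (b ∩ insert x W).card = if x ∈ b then (b ∩ W).card + 1 else (b ∩ W).card := by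
    intro b x hxW
    by_cases hx : x ∈ b
    · rw [if_pos hx, Finset.inter_insert_of_mem hx,
        Finset.card_insert_of_notMem (fun h => hxW (Finset.mem_inter.mp h).2)]
    · rw [if_neg hx, Finset.inter_insert_of_notMem hx]
  apply Multiset.sum_lt_sum
  · intro b hb
    rw [hcard b d hdW, hcard b c hcW]
    by_cases hd : d ∈ b
    · rw [if_pos hd, if_pos (hsub b hb hd)]
    · rw [if_neg hd]
      by_cases hc : c ∈ b
      · rw [if_pos hc]; exact le_of_lt (hstrict _)
      · rw [if_neg hc]
  · obtain ⟨b, hb, hc, hd⟩ := hproper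
    refine ⟨b, hb, ?_⟩
    rw [hcard b d hdW, hcard b c hcW, if_neg hd, if_pos hc]
    exact hstrict _

/-- Sequential Thiele rules with strictly increasing scoring function only pick
support-maximal candidates on laminar profiles: if `∅ ≠ N_A(d) ⊊ N_A(c)` and
`c, d ∉ W`, then `ŝ(A, W ∪ {d}) < ŝ(A, W ∪ {c})`; in particular, given any valid
sequence of the sequential Thiele rule with both `c` and `d` unchosen, `d` does not
maximize the score and is not selected next. -/
theorem seqThiele_strict_support_maximal
    {C : Type*} [DecidableEq C] [Fintype C]
    (s : ℕ → ℚ) (h0 : s 0 = 0) (h1 : 0 < s 1)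
    (hstrict : ∀ x : ℕ, s x < s (x + 1))
    (hconcave : ∀ x : ℕ, s (x + 2) - s (x + 1) ≤ s (x + 1) - s x)
    (A : Multiset (Finset C)) (hA : validProfile A) (hlam : Laminar A)
    (W : Finset C) (c d : C) (hcW : c ∉ W) (hdW : d ∉ W)
    (hne : ∃ b ∈ A, d ∈ b)
    (hsub : ∀ b ∈ A, d ∈ b → c ∈ b)
    (hproper : ∃ b ∈ A, c ∈ b ∧ d ∉ b) :
    thieleScore s A (insert d W) < thieleScore s A (insert c W) ∧
    (∀ L : List C, seqThieleValid s A ∅ L → c ∉ L.toFinset → d ∉ L.toFinset →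
      ¬ (∀ x : C, x ∉ L.toFinset →
          thieleScore s A (insert x L.toFinset) ≤ thieleScore s A (insert d L.toFinset))) := by
  refine ⟨thiele_key s hstrict A W c d hcW hdW hsub hproper, ?_⟩
  intro L _ hcL hdL hmax
  exact absurd (hmax c hcL)
    (not_le.mpr (thiele_key s hstrict A L.toFinset c d hcL hdL hsub hproper))
end
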